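/- Completeness of the WMM I²E model with respect to the WMM axiomatic model: for any relations <_po, <_mo, rf over a finite program's instructions satisfying the WMM Inst-Order and Ld-Val axioms, there exists an execution of the WMM I²E abstract machine of the same program in which every instruction produces the same result (each load returns the value of the same store as specified by rf). -/

import Mathlib

/-- Instruction operations of the WMM axiomatic model. -/
inductive IOp
  | ld (a : ℕ)
  | st (a : ℕ) (v : ℕ)
  | commit
  | reconcile
  | nm
  deriving DecidableEq

/-- An instruction: processor id, position in program order, operation. -/
structure Instr where
  proc : ℕ
  idx : ℕ
  op : IOp
  deriving DecidableEq

/-- Per-processor program order. -/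
def po (x y : Instr) : Prop := x.proc = y.proc ∧ x.idx < y.idx

/-- The WMM order-preserving table `order(X, Y)`. -/
def ordTable : IOp → IOp → Prop
  | .ld a, .ld b => a = b
  | .ld _, .st _ _ => True
  | .ld _, .reconcile => True
  | .ld _, .commit => True
  | .st a _, .st b _ => a = b
  | .st _ _, .commit => True
  | .st _ _, .ld _ => False
  | .st _ _, .reconcile => False
  | .reconcile, .ld _ => True
  | .reconcile, .st _ _ => True
  | .reconcile, .reconcile => True
  | .reconcile, .commit => True
  | .commit, .ld _ => False
  | .commit, .st _ _ => True
  | .commit, .reconcile => True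
  | .commit, .commit => True
  | _, _ => False

def isStoreTo (a : ℕ) (x : Instr) : Prop := ∃ v, x.op = IOp.st a v
def isLoadOf (a : ℕ) (x : Instr) : Prop := x.op = IOp.ld a

/-- A WMM axiomatic execution: a set of instructions `I`, a global memory
order `mo` (strict total on `I`), a reads-from relation `rf`, satisfying the
Inst-Order and Ld-Val axioms of WMM. -/
abbrev Buf := List (ℕ × ℕ)

def hasAddr (l : Buf) (a : ℕ) : Prop := a ∈ l.map Prod.fst

instance (l : Buf) (a : ℕ) : Decidable (hasAddr l a) :=
  inferInstanceAs (Decidable (a ∈ l.map Prod.fst))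

def remAddr (l : Buf) (a : ℕ) : Buf := l.filter (fun e => e.1 ≠ a)

/-- State of the WMM I²E machine running a program `prog` (processor × index →
operation): atomic memory, store buffers and invalidation buffers (head =
newest), per-processor count of executed instructions, and recorded load
results. -/
structure PSt where
  mem : ℕ → ℕ
  sb : ℕ → Buf
  ib : ℕ → Buf
  cnt : ℕ → ℕ
  res : ℕ → ℕ → ℕ

def setRes (res : ℕ → ℕ → ℕ) (i k v : ℕ) : ℕ → ℕ → ℕ :=
  fun j l => if j = i ∧ l = k then v else res j l

/-- Operations of the WMM I²E abstract machine executing `prog`. -/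
inductive PStep (prog : ℕ → ℕ → IOp) : PSt → PSt → Prop
  | nm (s : PSt) (i : ℕ) (h : prog i (s.cnt i) = IOp.nm) :
      PStep prog s { s with cnt := Function.update s.cnt i (s.cnt i + 1) }
  | store (s : PSt) (i a v : ℕ) (h : prog i (s.cnt i) = IOp.st a v) :
      PStep prog s
        { s with sb := Function.update s.sb i ((a, v) :: s.sb i),
                 ib := Function.update s.ib i (remAddr (s.ib i) a),
                 cnt := Function.update s.cnt i (s.cnt i + 1) }
  | commit (s : PSt) (i : ℕ) (h : prog i (s.cnt i) = IOp.commit)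
      (he : s.sb i = []) :
      PStep prog s { s with cnt := Function.update s.cnt i (s.cnt i + 1) }
  | reconcile (s : PSt) (i : ℕ) (h : prog i (s.cnt i) = IOp.reconcile) :
      PStep prog s
        { s with ib := Function.update s.ib i [],
                 cnt := Function.update s.cnt i (s.cnt i + 1) }
  | ldSb (s : PSt) (i a v : ℕ) (l1 l2 : Buf) (h : prog i (s.cnt i) = IOp.ld a)
      (hsb : s.sb i = l1 ++ (a, v) :: l2) (hy : ¬ hasAddr l1 a) :
      PStep prog s
        { s with res := setRes s.res i (s.cnt i) v,
                 cnt := Function.update s.cnt i (s.cnt i + 1) }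
  | ldMem (s : PSt) (i a : ℕ) (h : prog i (s.cnt i) = IOp.ld a)
      (hn : ¬ hasAddr (s.sb i) a) :
      PStep prog s
        { s with res := setRes s.res i (s.cnt i) (s.mem a),
                 ib := Function.update s.ib i (remAddr (s.ib i) a),
                 cnt := Function.update s.cnt i (s.cnt i + 1) }
  | ldIb (s : PSt) (i a v : ℕ) (l1 l2 : Buf) (h : prog i (s.cnt i) = IOp.ld a)
      (hn : ¬ hasAddr (s.sb i) a) (hib : s.ib i = l1 ++ (a, v) :: l2) :
      PStep prog s
        { s with res := setRes s.res i (s.cnt i) v,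
                 ib := Function.update s.ib i (l1 ++ (a, v) :: remAddr l2 a),
                 cnt := Function.update s.cnt i (s.cnt i + 1) }
  | deqSb (s : PSt) (i a v : ℕ) (l1 l2 : Buf)
      (hsb : s.sb i = l1 ++ (a, v) :: l2) (hold : ¬ hasAddr l2 a) :
      PStep prog s
        { s with mem := Function.update s.mem a v,
                 sb := Function.update s.sb i (l1 ++ l2),
                 ib := fun j => if j = i ∨ hasAddr (s.sb j) a then s.ib j
                                else (a, s.mem a) :: s.ib j }

def PInit (m0 : ℕ → ℕ) : PSt :=
  { mem := m0, sb := fun _ => [], ib := fun _ => [],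
    cnt := fun _ => 0, res := fun _ _ => 0 }

/-- The initialization store instruction for address `a` (on the reserved
processor 0). -/
def initInstr (m0 : ℕ → ℕ) (a : ℕ) : Instr := ⟨0, a, IOp.st a (m0 a)⟩

@[simp] def List.get? {α : Type*} : List α → ℕ → Option α
  | [], _ => none
  | a :: _, 0 => some a
  | _ :: as, n + 1 => List.get? as n

theorem List.get?_eq_getElem? {α : Type*} (l : List α) (n : ℕ) : l.get? n = l[n]? := by
  induction l generalizing n with
  | nil => simp
  | cons x xs ih => cases n <;> simp [ih]

namespace WmmAux

def filtA (l : Buf) (a : ℕ) : Buf := l.filter (fun e => e.1 = a)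

lemma hasAddr_iff {l : Buf} {a : ℕ} : hasAddr l a ↔ ∃ e ∈ l, e.1 = a := by
  simp [hasAddr, List.mem_map]

lemma not_hasAddr_iff {l : Buf} {a : ℕ} : ¬ hasAddr l a ↔ ∀ e ∈ l, e.1 ≠ a := by
  rw [hasAddr_iff]; push_neg; rfl

lemma filtA_remAddr_self (l : Buf) (a : ℕ) : filtA (remAddr l a) a = [] := by
  simp only [filtA, remAddr, List.filter_filter]
  rw [List.filter_eq_nil_iff]
  intro e _
  by_cases h : e.1 = a <;> simp [h]

lemma filtA_remAddr_ne {a b : ℕ} (h : b ≠ a) (l : Buf) :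
    filtA (remAddr l a) b = filtA l b := by
  simp only [filtA, remAddr, List.filter_filter]
  apply List.filter_congr
  intro e _
  by_cases h' : e.1 = b <;> simp [h', h]

lemma filter_get?_split {p : ℕ × ℕ → Bool} {l : Buf} {n : ℕ} {e : ℕ × ℕ}
    (h : (l.filter p).get? n = some e) :
    ∃ l1 l2, l = l1 ++ e :: l2 ∧ l1.filter p = (l.filter p).take n := by
  induction l generalizing n with
  | nil => simp at h
  | cons x xs ih =>
    by_cases hp : p x
    · rw [List.filter_cons_of_pos hp] at h ⊢
      cases n with
      | zero =>
        simp at h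
        exact ⟨[], xs, by simp [h], by simp⟩
      | succ n =>
        simp only [List.get?] at h
        obtain ⟨l1, l2, hl, hf⟩ := ih h
        exact ⟨x :: l1, l2, by simp [hl], by
          rw [List.filter_cons_of_pos hp, hf]; simp [List.take]⟩
    · rw [List.filter_cons_of_neg hp] at h ⊢
      obtain ⟨l1, l2, hl, hf⟩ := ih h
      exact ⟨x :: l1, l2, by simp [hl], by rw [List.filter_cons_of_neg hp, hf]⟩

lemma range_rev_split {n k : ℕ} (h : k < n) :
    ∃ r1 r2, (List.range n).reverse = r1 ++ k :: r2 ∧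
      (∀ x ∈ r1, k < x) ∧ (∀ x ∈ r2, x < k) := by
  induction n with
  | zero => omega
  | succ m ih =>
    rw [List.range_succ, List.reverse_append]
    rcases Nat.lt_succ_iff_lt_or_eq.mp h with h' | h'
    · obtain ⟨r1, r2, he, h1, h2⟩ := ih h'
      exact ⟨m :: r1, r2, by simp [he], by
        intro x hx; rcases List.mem_cons.mp hx with rfl | hx
        · exact h'
        · exact h1 x hx, h2⟩
    · subst h'
      exact ⟨[], (List.range k).reverse, by simp, by simp, by
        intro x hx; rw [List.mem_reverse, List.mem_range] at hx; exact hx⟩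

lemma range_rev_succ (n : ℕ) :
    (List.range (n+1)).reverse = n :: (List.range n).reverse := by
  rw [List.range_succ, List.reverse_append]; simp

end WmmAux
namespace WmmAux

section Main

variable (N : ℕ) (len : ℕ → ℕ) (prog : ℕ → ℕ → IOp) (m0 : ℕ → ℕ)
variable (mo rf : Instr → Instr → Prop)

/-- The set of instructions of the axiomatic execution. -/
def II : Set Instr :=
  { x : Instr | (1 ≤ x.proc ∧ x.proc ≤ N ∧ x.idx < len x.proc ∧
      x.op = prog x.proc x.idx) ∨ (∃ a, x = initInstr m0 a) }

/-- The finite set of program instructions. -/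
def Prg : Finset Instr :=
  (Finset.Icc 1 N).biUnion
    (fun i => (Finset.range (len i)).image fun k => ⟨i, k, prog i k⟩)

lemma mem_Prg {X : Instr} :
    X ∈ Prg N len prog ↔
      (1 ≤ X.proc ∧ X.proc ≤ N ∧ X.idx < len X.proc ∧
        X.op = prog X.proc X.idx) := by
  simp only [Prg, Finset.mem_biUnion, Finset.mem_Icc, Finset.mem_image,
    Finset.mem_range]
  constructor
  · rintro ⟨i, ⟨h1, h2⟩, k, hk, rfl⟩
    exact ⟨h1, h2, hk, rfl⟩
  · rintro ⟨h1, h2, h3, h4⟩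
    exact ⟨X.proc, ⟨h1, h2⟩, X.idx, h3, by cases X; simp at h4 ⊢; exact h4.symm⟩

lemma Prg_sub_II {X : Instr} (h : X ∈ Prg N len prog) : X ∈ II N len prog m0 :=
  Or.inl ((mem_Prg N len prog).mp h)

lemma init_mem_II (a : ℕ) : initInstr m0 a ∈ II N len prog m0 := Or.inr ⟨a, rfl⟩

lemma mk_mem_Prg {i k : ℕ} (h1 : 1 ≤ i) (h2 : i ≤ N) (h3 : k < len i) :
    (⟨i, k, prog i k⟩ : Instr) ∈ Prg N len prog := by
  rw [mem_Prg]; exact ⟨h1, h2, h3, rfl⟩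

/-- Loads and fences (instructions whose execution order is constrained). -/
def lfB : IOp → Bool
  | IOp.ld _ => true
  | IOp.commit => true
  | IOp.reconcile => true
  | _ => false

/-- Stores and fences (instructions executed by the time their slot is
processed). -/
def sfB : IOp → Bool
  | IOp.st _ _ => true
  | IOp.commit => true
  | IOp.reconcile => true
  | _ => false

def stOf : IOp → Option (ℕ × ℕ)
  | IOp.st a v => some (a, v)
  | _ => none

lemma stOf_eq_some {o : IOp} {e : ℕ × ℕ} :
    stOf o = some e ↔ o = IOp.st e.1 e.2 := by
  cases o <;> simp [stOf] <;> cases e <;> simp <;> tauto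

def gD (D : Finset Instr) (i k : ℕ) : Option (ℕ × ℕ) :=
  (stOf (prog i k)).bind
    (fun e => if (⟨i, k, IOp.st e.1 e.2⟩ : Instr) ∈ D then none else some e)

lemma gD_eq_some {D : Finset Instr} {i k : ℕ} {e : ℕ × ℕ} :
    gD prog D i k = some e ↔
      (prog i k = IOp.st e.1 e.2 ∧ (⟨i, k, IOp.st e.1 e.2⟩ : Instr) ∉ D) := by
  unfold gD
  rcases h : stOf (prog i k) with - | e'
  · simp only [Option.bind]
    constructor
    · rintro ⟨⟩
    · rintro ⟨h1, -⟩
      rw [(stOf_eq_some (e := e)).mpr h1] at h; cases h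
  · rw [stOf_eq_some] at h
    simp only [Option.bind, h]
    obtain ⟨a', v'⟩ := e'
    by_cases hD : (⟨i, k, IOp.st a' v'⟩ : Instr) ∈ D <;>
      obtain ⟨ea, ev⟩ := e <;> simp_all [Prod.ext_iff] <;>
        rintro rfl rfl <;> simp_all

/-- Specification of the store buffer contents. -/
def sbSpec (D : Finset Instr) (cnt : ℕ → ℕ) (i : ℕ) : Buf :=
  ((List.range (cnt i)).reverse).filterMap (gD prog D i)

lemma mem_sbSpec {D : Finset Instr} {cnt : ℕ → ℕ} {i : ℕ} {e : ℕ × ℕ} :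
    e ∈ sbSpec prog D cnt i ↔
      ∃ k < cnt i, prog i k = IOp.st e.1 e.2 ∧
        (⟨i, k, IOp.st e.1 e.2⟩ : Instr) ∉ D := by
  simp only [sbSpec, List.mem_filterMap, List.mem_reverse, List.mem_range]
  constructor
  · rintro ⟨k, hk, hg⟩
    exact ⟨k, hk, (gD_eq_some prog).mp hg⟩
  · rintro ⟨k, hk, h1, h2⟩
    exact ⟨k, hk, (gD_eq_some prog).mpr ⟨h1, h2⟩⟩

/-- `S` is the most recent store to `a` among the processed ones
(including the initialization store). -/
def MaxSt (D : Finset Instr) (a : ℕ) (S : Instr) : Prop :=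
  (S ∈ D ∨ S = initInstr m0 a) ∧ isStoreTo a S ∧
    ∀ W, (W ∈ D ∨ W = initInstr m0 a) → isStoreTo a W → W = S ∨ mo W S

/-- A pending load whose value has already been overwritten in memory:
its value must be present in the invalidation buffer. -/
def PendC (D : Finset Instr) (cnt : ℕ → ℕ) (i a k : ℕ) (S : Instr) (v : ℕ) :
    Prop :=
  cnt i ≤ k ∧ (⟨i, k, IOp.ld a⟩ : Instr) ∈ D ∧ rf S ⟨i, k, IOp.ld a⟩ ∧
    S.op = IOp.st a v ∧ (S ∈ D ∨ S = initInstr m0 a) ∧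
    ∃ W ∈ D, isStoreTo a W ∧ mo S W

/-- The main invariant relating the processed prefix `D` of the memory
order, the per-processor counts of executed instructions, and the machine
state. -/
structure Core (D : Finset Instr) (cnt : ℕ → ℕ) (s : PSt) : Prop where
  cnt_eq : s.cnt = cnt
  sub : ∀ X ∈ D, X ∈ Prg N len prog
  closed : ∀ X ∈ D, ∀ Y ∈ Prg N len prog, Y ∉ D → mo X Y
  cnt0 : ∀ i, ¬ (1 ≤ i ∧ i ≤ N) → cnt i = 0
  cntle : ∀ i, cnt i ≤ len i
  lfD : ∀ i k, k < cnt i → lfB (prog i k) = true →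
    (⟨i, k, prog i k⟩ : Instr) ∈ D
  mem : ∀ a, ∃ S v, MaxSt m0 mo D a S ∧ S.op = IOp.st a v ∧ s.mem a = v
  sb : ∀ i, s.sb i = sbSpec prog D cnt i
  res : ∀ i k a S v, k < cnt i → prog i k = IOp.ld a →
    rf S ⟨i, k, IOp.ld a⟩ → S.op = IOp.st a v → s.res i k = v
  ib : ∀ i a, ∃ f : ℕ → ℕ,
    (∀ k S v, PendC m0 mo rf D cnt i a k S v →
      (filtA (s.ib i) a).get? (f k) = some (a, v)) ∧
    (∀ k S v k' S' v', PendC m0 mo rf D cnt i a k S v →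
      PendC m0 mo rf D cnt i a k' S' v' → k ≤ k' → f k' ≤ f k)

/-- Stores and fences in `D` have been executed. -/
def SFex (D : Finset Instr) (cnt : ℕ → ℕ) : Prop :=
  ∀ X ∈ D, sfB X.op = true → X.idx < cnt X.proc

/-- The hypotheses of the completeness theorem. -/
structure Hyp : Prop where
  irrefl : ∀ x, ¬ mo x x
  tr : ∀ x y z, mo x y → mo y z → mo x z
  total : ∀ x ∈ II N len prog m0, ∀ y ∈ II N len prog m0, x ≠ y →
    mo x y ∨ mo y x
  hmin : ∀ a, ∀ x ∈ II N len prog m0, (isStoreTo a x ∨ isLoadOf a x) →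
    x ≠ initInstr m0 a → mo (initInstr m0 a) x
  instOrder : ∀ x ∈ II N len prog m0, ∀ y ∈ II N len prog m0, po x y →
    ordTable x.op y.op → mo x y
  rf_mem : ∀ S L, rf S L → S ∈ II N len prog m0 ∧ L ∈ II N len prog m0
  rf_tot : ∀ L ∈ II N len prog m0, ∀ a, L.op = IOp.ld a → ∃ S, rf S L
  ldVal : ∀ S L a, rf S L → L.op = IOp.ld a →
    isStoreTo a S ∧ (mo S L ∨ po S L) ∧
    ∀ S' ∈ II N len prog m0, isStoreTo a S' → (mo S' L ∨ po S' L) →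
      S' = S ∨ mo S' S

variable {N len prog m0 mo rf}

lemma Hyp.asym (H : Hyp N len prog m0 mo rf) {x y : Instr} (h : mo x y) :
    ¬ mo y x := fun h' => H.irrefl x (H.tr x y x h h')

end Main
end WmmAux
namespace WmmAux
section Main
variable {N : ℕ} {len : ℕ → ℕ} {prog : ℕ → ℕ → IOp} {m0 : ℕ → ℕ}
variable {mo rf : Instr → Instr → Prop}

lemma exists_min (H : Hyp N len prog m0 mo rf) (R : Finset Instr)
    (hne : R.Nonempty) (hsub : ∀ x ∈ R, x ∈ II N len prog m0) :
    ∃ z ∈ R, ∀ w ∈ R, w ≠ z → mo z w := by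
  classical
  induction R using Finset.induction_on with
  | empty => exact absurd hne (by simp)
  | @insert x R' hx ih =>
    rcases R'.eq_empty_or_nonempty with rfl | hne'
    · refine ⟨x, by simp, ?_⟩
      intro w hw hwx
      simp at hw; exact absurd hw hwx
    · obtain ⟨z', hz', hmin'⟩ := ih hne' (fun y hy => hsub y (by simp [hy]))
      have hxz : x ≠ z' := fun h => hx (h ▸ hz')
      rcases H.total x (hsub x (by simp)) z' (hsub z' (by simp [hz'])) hxz
        with h | h
      · refine ⟨x, by simp, ?_⟩
        intro w hw hwx
        rcases Finset.mem_insert.mp hw with rfl | hw'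
        · exact absurd rfl hwx
        · rcases eq_or_ne w z' with rfl | hwz
          · exact h
          · exact H.tr _ _ _ h (hmin' w hw' hwz)
      · refine ⟨z', by simp [hz'], ?_⟩
        intro w hw hwz
        rcases Finset.mem_insert.mp hw with rfl | hw'
        · exact h
        · exact hmin' w hw' hwz

lemma MaxSt_unique (H : Hyp N len prog m0 mo rf) {D : Finset Instr} {a : ℕ}
    {S S' : Instr} (h : MaxSt m0 mo D a S) (h' : MaxSt m0 mo D a S') :
    S = S' := by
  rcases h'.2.2 S h.1 h.2.1 with h1 | h1
  · exact h1
  · rcases h.2.2 S' h'.1 h'.2.1 with h2 | h2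
    · exact h2.symm
    · exact absurd h1 (H.asym h2)

lemma rf_unique (H : Hyp N len prog m0 mo rf) {S S' L : Instr} {a : ℕ}
    (h : rf S L) (h' : rf S' L) (hop : L.op = IOp.ld a) : S = S' := by
  obtain ⟨hst, hrel, hmax⟩ := H.ldVal S L a h hop
  obtain ⟨hst', hrel', hmax'⟩ := H.ldVal S' L a h' hop
  rcases hmax S' (H.rf_mem S' L h').1 hst' hrel' with h1 | h1
  · exact h1.symm
  · rcases hmax' S (H.rf_mem S L h).1 hst hrel with h2 | h2
    · exact h2
    · exact absurd h1 (H.asym h2)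

lemma rf_mono (H : Hyp N len prog m0 mo rf) {i k k' a : ℕ} {S S' : Instr}
    (hk : k < k') (h : rf S ⟨i, k, IOp.ld a⟩) (h' : rf S' ⟨i, k', IOp.ld a⟩)
    (hII : (⟨i, k, IOp.ld a⟩ : Instr) ∈ II N len prog m0)
    (hII' : (⟨i, k', IOp.ld a⟩ : Instr) ∈ II N len prog m0) :
    S = S' ∨ mo S S' := by
  obtain ⟨hst, hrel, -⟩ := H.ldVal S _ a h rfl
  obtain ⟨-, -, hmax'⟩ := H.ldVal S' _ a h' rfl
  have hLL : mo (⟨i, k, IOp.ld a⟩ : Instr) ⟨i, k', IOp.ld a⟩ :=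
    H.instOrder _ hII _ hII' ⟨rfl, hk⟩ rfl
  refine hmax' S (H.rf_mem S _ h).1 hst ?_
  rcases hrel with h1 | h1
  · exact Or.inl (H.tr _ _ _ h1 hLL)
  · exact Or.inr ⟨h1.1, h1.2.trans hk⟩

lemma init_proc (a : ℕ) : (initInstr m0 a).proc = 0 := rfl

/-- When a pending load reads from an already-processed (or initialization)
store, the processor's store buffer contains no store to that address. -/
lemma no_sb_addr (H : Hyp N len prog m0 mo rf) {D : Finset Instr}
    {cnt : ℕ → ℕ} {i a k : ℕ} {S : Instr}
    (hclosed : ∀ X ∈ D, ∀ Y ∈ Prg N len prog, Y ∉ D → mo X Y)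
    (hcntle : ∀ j, cnt j ≤ len j)
    (hiN : 1 ≤ i ∧ i ≤ N) (hk : cnt i ≤ k)
    (hrf : rf S ⟨i, k, IOp.ld a⟩)
    (hA : S ∈ D ∨ S = initInstr m0 a) :
    ¬ hasAddr (sbSpec prog D cnt i) a := by
  intro hha
  obtain ⟨e, he, hea⟩ := hasAddr_iff.mp hha
  obtain ⟨k', hk', hst, hnD⟩ := (mem_sbSpec prog).mp he
  rw [hea] at hst hnD
  set W : Instr := ⟨i, k', IOp.st a e.2⟩ with hW
  have hWP : W ∈ Prg N len prog := by
    rw [mem_Prg]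
    exact ⟨hiN.1, hiN.2, lt_of_lt_of_le hk' (hcntle i), hst.symm⟩
  have hWI : W ∈ II N len prog m0 := Prg_sub_II _ _ _ _ hWP
  obtain ⟨-, -, hmax⟩ := H.ldVal S _ a hrf rfl
  rcases hmax W hWI ⟨e.2, rfl⟩ (Or.inr ⟨rfl, lt_of_lt_of_le hk' hk⟩)
    with h1 | h1
  · rcases hA with hSD | hSi
    · exact hnD (h1 ▸ hSD)
    · have : W.proc = 0 := by rw [h1, hSi]; rfl
      simp [hW] at this; omega
  · rcases hA with hSD | hSi
    · exact H.asym (hclosed S hSD W hWP hnD) h1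
    · have : mo S W := by
        rw [hSi]
        refine H.hmin a W hWI (Or.inl ⟨e.2, rfl⟩) ?_
        intro h
        have : W.proc = 0 := by rw [h]; rfl
        simp [hW] at this; omega
      exact H.asym this h1

lemma PendC_cnt_mono {D : Finset Instr} {cnt cnt' : ℕ → ℕ}
    (h : ∀ j, cnt j ≤ cnt' j) {i a k : ℕ} {S : Instr} {v : ℕ}
    (hp : PendC m0 mo rf D cnt' i a k S v) : PendC m0 mo rf D cnt i a k S v :=
  ⟨le_trans (h i) hp.1, hp.2⟩

lemma opD {D : Finset Instr} (hsub : ∀ X ∈ D, X ∈ Prg N len prog)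
    {X : Instr} (hX : X ∈ D) :
    1 ≤ X.proc ∧ X.proc ≤ N ∧ X.idx < len X.proc ∧
      X.op = prog X.proc X.idx := (mem_Prg N len prog).mp (hsub X hX)

end Main
end WmmAux
namespace WmmAux
section Main
variable {N : ℕ} {len : ℕ → ℕ} {prog : ℕ → ℕ → IOp} {m0 : ℕ → ℕ}
variable {mo rf : Instr → Instr → Prop}

lemma cnt_upd_le (cnt : ℕ → ℕ) (i : ℕ) :
    ∀ j, cnt j ≤ Function.update cnt i (cnt i + 1) j := by
  intro j
  rcases eq_or_ne j i with rfl | hne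
  · rw [Function.update_self]; omega
  · rw [Function.update_of_ne hne]

lemma cnt0_upd {cnt : ℕ → ℕ} {i : ℕ}
    (h : ∀ j, ¬ (1 ≤ j ∧ j ≤ N) → cnt j = 0) (hiN : 1 ≤ i ∧ i ≤ N) :
    ∀ j, ¬ (1 ≤ j ∧ j ≤ N) → Function.update cnt i (cnt i + 1) j = 0 := by
  intro j hj
  rcases eq_or_ne j i with rfl | hne
  · exact absurd hiN hj
  · rw [Function.update_of_ne hne]; exact h j hj

lemma cntle_upd {cnt : ℕ → ℕ} {i : ℕ} (h : ∀ j, cnt j ≤ len j)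
    (hk : cnt i < len i) :
    ∀ j, Function.update cnt i (cnt i + 1) j ≤ len j := by
  intro j
  rcases eq_or_ne j i with rfl | hne
  · rw [Function.update_self]; omega
  · rw [Function.update_of_ne hne]; exact h j

lemma lfD_upd {D : Finset Instr} {cnt : ℕ → ℕ} {i : ℕ}
    (h : ∀ j k', k' < cnt j → lfB (prog j k') = true →
      (⟨j, k', prog j k'⟩ : Instr) ∈ D)
    (hnew : lfB (prog i (cnt i)) = true →
      (⟨i, cnt i, prog i (cnt i)⟩ : Instr) ∈ D) :
    ∀ j k', k' < Function.update cnt i (cnt i + 1) j →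
      lfB (prog j k') = true → (⟨j, k', prog j k'⟩ : Instr) ∈ D := by
  intro j k' hlt hlf
  rcases eq_or_ne j i with rfl | hne
  · rw [Function.update_self] at hlt
    rcases Nat.lt_succ_iff_lt_or_eq.mp hlt with h' | rfl
    · exact h _ _ h' hlf
    · exact hnew hlf
  · rw [Function.update_of_ne hne] at hlt; exact h _ _ hlt hlf

lemma res_keep {cnt : ℕ → ℕ} {i : ℕ} {r : ℕ → ℕ → ℕ}
    (hres : ∀ j k a S v, k < cnt j → prog j k = IOp.ld a →
      rf S ⟨j, k, IOp.ld a⟩ → S.op = IOp.st a v → r j k = v)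
    (hnl : ∀ a, prog i (cnt i) ≠ IOp.ld a) :
    ∀ j k a S v, k < Function.update cnt i (cnt i + 1) j →
      prog j k = IOp.ld a → rf S ⟨j, k, IOp.ld a⟩ → S.op = IOp.st a v →
      r j k = v := by
  intro j k a S v hlt h1 h2 h3
  rcases eq_or_ne j i with rfl | hne
  · rw [Function.update_self] at hlt
    rcases Nat.lt_succ_iff_lt_or_eq.mp hlt with h' | rfl
    · exact hres _ _ _ _ _ h' h1 h2 h3
    · exact absurd h1 (hnl a)
  · rw [Function.update_of_ne hne] at hlt
    exact hres _ _ _ _ _ hlt h1 h2 h3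

lemma res_set (H : Hyp N len prog m0 mo rf)
    {cnt : ℕ → ℕ} {i : ℕ} {r : ℕ → ℕ → ℕ} {a w : ℕ} {S0 : Instr}
    (hres : ∀ j k a S v, k < cnt j → prog j k = IOp.ld a →
      rf S ⟨j, k, IOp.ld a⟩ → S.op = IOp.st a v → r j k = v)
    (hop : prog i (cnt i) = IOp.ld a)
    (hrfS : rf S0 ⟨i, cnt i, IOp.ld a⟩) (hS0 : S0.op = IOp.st a w) :
    ∀ j k a' S v, k < Function.update cnt i (cnt i + 1) j →
      prog j k = IOp.ld a' → rf S ⟨j, k, IOp.ld a'⟩ → S.op = IOp.st a' v →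
      setRes r i (cnt i) w j k = v := by
  intro j k a' S v hlt h1 h2 h3
  rw [setRes]
  by_cases hc : j = i ∧ k = cnt i
  · obtain ⟨rfl, rfl⟩ := hc
    rw [if_pos ⟨rfl, rfl⟩]
    have ha : a' = a := by rw [hop] at h1; cases h1; rfl
    subst ha
    have hS : S0 = S := rf_unique H hrfS h2 rfl
    rw [← hS, hS0] at h3; cases h3; rfl
  · rw [if_neg hc]
    have hlt' : k < cnt j := by
      rcases eq_or_ne j i with rfl | hne
      · rw [Function.update_self] at hlt
        rcases Nat.lt_succ_iff_lt_or_eq.mp hlt with h' | rfl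
        · exact h'
        · exact absurd ⟨rfl, rfl⟩ hc
      · rwa [Function.update_of_ne hne] at hlt
    exact hres _ _ _ _ _ hlt' h1 h2 h3

lemma ib_carry {D : Finset Instr} {cnt cnt' : ℕ → ℕ} {ibf ibf' : ℕ → Buf}
    (hle : ∀ j, cnt j ≤ cnt' j) (hibf : ∀ p, ibf' p = ibf p)
    (hib : ∀ p b, ∃ f : ℕ → ℕ,
      (∀ k S v, PendC m0 mo rf D cnt p b k S v →
        (filtA (ibf p) b).get? (f k) = some (b, v)) ∧
      (∀ k S v k' S' v', PendC m0 mo rf D cnt p b k S v →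
        PendC m0 mo rf D cnt p b k' S' v' → k ≤ k' → f k' ≤ f k)) :
    ∀ p b, ∃ f : ℕ → ℕ,
      (∀ k S v, PendC m0 mo rf D cnt' p b k S v →
        (filtA (ibf' p) b).get? (f k) = some (b, v)) ∧
      (∀ k S v k' S' v', PendC m0 mo rf D cnt' p b k S v →
        PendC m0 mo rf D cnt' p b k' S' v' → k ≤ k' → f k' ≤ f k) := by
  intro p b
  obtain ⟨f, h1, h2⟩ := hib p b
  refine ⟨f, ?_, ?_⟩
  · intro k S v hp
    rw [hibf]
    exact h1 k S v (PendC_cnt_mono hle hp)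
  · intro k S v k' S' v' hp hp' hkk
    exact h2 k S v k' S' v' (PendC_cnt_mono hle hp) (PendC_cnt_mono hle hp') hkk

lemma sbSpec_succ_none {D : Finset Instr} {cnt : ℕ → ℕ} {i : ℕ}
    (h : gD prog D i (cnt i) = none) :
    sbSpec prog D (Function.update cnt i (cnt i + 1)) i = sbSpec prog D cnt i := by
  unfold sbSpec
  rw [Function.update_self, range_rev_succ, List.filterMap_cons_none h]

lemma sbSpec_succ_some {D : Finset Instr} {cnt : ℕ → ℕ} {i : ℕ} {e : ℕ × ℕ}
    (h : gD prog D i (cnt i) = some e) :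
    sbSpec prog D (Function.update cnt i (cnt i + 1)) i =
      e :: sbSpec prog D cnt i := by
  unfold sbSpec
  rw [Function.update_self, range_rev_succ, List.filterMap_cons_some h]

lemma sbSpec_update_ne {D : Finset Instr} {cnt : ℕ → ℕ} {i p : ℕ} {m : ℕ}
    (h : p ≠ i) :
    sbSpec prog D (Function.update cnt i m) p = sbSpec prog D cnt p := by
  unfold sbSpec
  rw [Function.update_of_ne h]

lemma gD_none_of_not_st {D : Finset Instr} {i k : ℕ}
    (h : stOf (prog i k) = none) : gD prog D i k = none := by
  unfold gD; rw [h]; rfl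

end Main
end WmmAux
namespace WmmAux
section Main
variable {N : ℕ} {len : ℕ → ℕ} {prog : ℕ → ℕ → IOp} {m0 : ℕ → ℕ}
variable {mo rf : Instr → Instr → Prop}

lemma filtA_append (l l' : Buf) (a : ℕ) :
    filtA (l ++ l') a = filtA l a ++ filtA l' a := by
  simp [filtA, List.filter_append]

lemma filtA_cons_self (l : Buf) (a v : ℕ) :
    filtA ((a, v) :: l) a = (a, v) :: filtA l a := by
  simp [filtA]

lemma filtA_cons_ne {a b : ℕ} (h : a ≠ b) (l : Buf) (v : ℕ) :
    filtA ((a, v) :: l) b = filtA l b := by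
  simp [filtA, h]

lemma filtA_get?_split {l : Buf} {a n v : ℕ}
    (h : (filtA l a).get? n = some (a, v)) :
    ∃ l1 l2, l = l1 ++ (a, v) :: l2 ∧ filtA l1 a = (filtA l a).take n :=
  filter_get?_split h

lemma get?_take' {α : Type*} {l : List α} {m n : ℕ} (h : m < n) :
    (l.take n).get? m = l.get? m := by
  induction l generalizing m n with
  | nil => simp
  | cons x xs ih =>
    cases n with
    | zero => omega
    | succ n =>
      cases m with
      | zero => simp [List.take]
      | succ m => simpa [List.take] using ih (by omega)

lemma stepOne (H : Hyp N len prog m0 mo rf) {D : Finset Instr} {s : PSt}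
    (hC : Core N len prog m0 mo rf D s.cnt s) {i : ℕ}
    (hiN : 1 ≤ i ∧ i ≤ N) (hk : s.cnt i < len i)
    (hLF1 : lfB (prog i (s.cnt i)) = true →
      (⟨i, s.cnt i, prog i (s.cnt i)⟩ : Instr) ∈ D)
    (hLF2 : (prog i (s.cnt i) = IOp.commit ∨ prog i (s.cnt i) = IOp.reconcile) →
      ∀ W ∈ D, ¬ mo (⟨i, s.cnt i, prog i (s.cnt i)⟩ : Instr) W)
    (hST : ∀ a v, prog i (s.cnt i) = IOp.st a v →
      (⟨i, s.cnt i, IOp.st a v⟩ : Instr) ∉ D) :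
    ∃ s', PStep prog s s' ∧
      Core N len prog m0 mo rf D (Function.update s.cnt i (s.cnt i + 1)) s' := by
  obtain ⟨-, hsub, hclosed, hcnt0, hcntle, hlfD, hmem, hsb, hres, hib⟩ := hC
  rcases hop : prog i (s.cnt i) with a | ⟨a, v⟩ | _ | _ | _
  case st =>
    have hWnD := hST a v hop
    refine ⟨_, PStep.store s i a v hop, ?_⟩
    refine ⟨rfl, hsub, hclosed, cnt0_upd hcnt0 hiN, cntle_upd hcntle hk,
      lfD_upd hlfD (fun hlf => by rw [hop] at hlf; cases hlf), hmem, ?_, ?_, ?_⟩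
    · -- store buffers
      intro p
      rcases eq_or_ne p i with rfl | hne
      · show (Function.update s.sb p ((a, v) :: s.sb p)) p = _
        rw [Function.update_self,
          sbSpec_succ_some ((gD_eq_some (e := (a, v)) prog).mpr ⟨hop, hWnD⟩), hsb]
      · show (Function.update s.sb i ((a, v) :: s.sb i)) p = _
        rw [Function.update_of_ne hne, sbSpec_update_ne hne, hsb]
    · exact res_keep hres (fun a' h => by rw [hop] at h; cases h)
    · -- invalidation buffers
      intro p b
      rcases eq_or_ne p i with rfl | hne
      · show ∃ f : ℕ → ℕ, (∀ k S v', PendC m0 mo rf D _ p b k S v' →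
          (filtA ((Function.update s.ib p (remAddr (s.ib p) a)) p) b).get?
            (f k) = some (b, v')) ∧ _
        rw [Function.update_self]
        rcases eq_or_ne b a with rfl | hba
        · -- no pending overwritten loads to `a` after an own store to `a`
          have hkill : ∀ k S v', ¬ PendC m0 mo rf D
              (Function.update s.cnt p (s.cnt p + 1)) p b k S v' := by
            intro k S v' hp
            obtain ⟨hck, hLD, hrfS, hSop, hA, hW⟩ := hp
            rw [Function.update_self] at hck
            set W0 : Instr := ⟨p, s.cnt p, IOp.st b v⟩ with hW0
            have hW0P : W0 ∈ Prg N len prog := by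
              rw [mem_Prg]; exact ⟨hiN.1, hiN.2, hk, hop.symm⟩
            have hW0I := Prg_sub_II N len prog m0 hW0P
            have hL0I := Prg_sub_II N len prog m0 (hsub _ hLD)
            obtain ⟨-, -, hmax⟩ := H.ldVal S _ b hrfS rfl
            rcases hmax W0 hW0I ⟨v, rfl⟩ (Or.inr ⟨rfl, show s.cnt p < k by omega⟩) with h1 | h1
            · rcases hA with hSD | hSi
              · exact hWnD (h1 ▸ hSD)
              · have : W0.proc = 0 := by rw [h1, hSi]; rfl
                simp [hW0] at this; omega
            · rcases hA with hSD | hSi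
              · exact H.asym (hclosed S hSD W0 hW0P hWnD) h1
              · refine H.asym ?_ h1
                rw [hSi]
                refine H.hmin b W0 hW0I (Or.inl ⟨v, rfl⟩) ?_
                intro hc
                have : W0.proc = 0 := by rw [hc]; rfl
                simp [hW0] at this; omega
          exact ⟨fun _ => 0, fun k S v' hp => absurd hp (hkill k S v'),
            fun k S v' k' S' v'' hp => absurd hp (hkill k S v')⟩
        · obtain ⟨f, h1, h2⟩ := hib p b
          refine ⟨f, ?_, ?_⟩
          · intro k S v' hp
            rw [filtA_remAddr_ne hba]
            exact h1 k S v' (PendC_cnt_mono (cnt_upd_le _ _) hp)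
          · intro k S v' k' S' v'' hp hp' hkk
            exact h2 k S v' k' S' v''
              (PendC_cnt_mono (cnt_upd_le _ _) hp)
              (PendC_cnt_mono (cnt_upd_le _ _) hp') hkk
      · show ∃ f : ℕ → ℕ, (∀ k S v', PendC m0 mo rf D _ p b k S v' →
          (filtA ((Function.update s.ib i (remAddr (s.ib i) a)) p) b).get?
            (f k) = some (b, v')) ∧ _
        rw [Function.update_of_ne hne]
        exact ib_carry (cnt_upd_le _ _) (fun _ => rfl) hib p b
  case commit =>
    have hCD : (⟨i, s.cnt i, IOp.commit⟩ : Instr) ∈ D := by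
      have := hLF1 (by rw [hop]; rfl)
      rwa [hop] at this
    have hsbe : s.sb i = [] := by
      rw [hsb]
      rw [List.eq_nil_iff_forall_not_mem]
      intro e he
      obtain ⟨k', hk', hst, hnD⟩ := (mem_sbSpec prog).mp he
      set W : Instr := ⟨i, k', IOp.st e.1 e.2⟩ with hW
      have hWP : W ∈ Prg N len prog := by
        rw [mem_Prg]
        exact ⟨hiN.1, hiN.2, lt_of_lt_of_le hk' (hcntle i), hst.symm⟩
      have hmoWC : mo W ⟨i, s.cnt i, IOp.commit⟩ :=
        H.instOrder W (Prg_sub_II N len prog m0 hWP) _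
          (Prg_sub_II N len prog m0 (hsub _ hCD)) ⟨rfl, hk'⟩ trivial
      exact H.asym (hclosed _ hCD W hWP hnD) hmoWC
    refine ⟨_, PStep.commit s i hop hsbe, ?_⟩
    refine ⟨rfl, hsub, hclosed, cnt0_upd hcnt0 hiN, cntle_upd hcntle hk,
      lfD_upd hlfD (fun _ => hLF1 (by rw [hop]; rfl)), hmem, ?_,
      res_keep hres (fun a' h => by rw [hop] at h; cases h),
      ib_carry (cnt_upd_le _ _) (fun _ => rfl) hib⟩
    · intro p
      rcases eq_or_ne p i with rfl | hne
      · rw [sbSpec_succ_none (gD_none_of_not_st (by rw [hop]; rfl)), hsb]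
      · rw [sbSpec_update_ne hne, hsb]
  case reconcile =>
    refine ⟨_, PStep.reconcile s i hop, ?_⟩
    refine ⟨rfl, hsub, hclosed, cnt0_upd hcnt0 hiN, cntle_upd hcntle hk,
      lfD_upd hlfD (fun _ => hLF1 (by rw [hop]; rfl)), hmem, ?_,
      res_keep hres (fun a' h => by rw [hop] at h; cases h), ?_⟩
    · intro p
      rcases eq_or_ne p i with rfl | hne
      · rw [sbSpec_succ_none (gD_none_of_not_st (by rw [hop]; rfl)), hsb]
      · rw [sbSpec_update_ne hne, hsb]
    · intro p b
      rcases eq_or_ne p i with rfl | hne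
      · show ∃ f : ℕ → ℕ, (∀ k S v', PendC m0 mo rf D _ p b k S v' →
          (filtA ((Function.update s.ib p ([] : Buf)) p) b).get?
            (f k) = some (b, v')) ∧ _
        have hkill : ∀ k S v', ¬ PendC m0 mo rf D
            (Function.update s.cnt p (s.cnt p + 1)) p b k S v' := by
          intro k S v' hp
          obtain ⟨hck, hLD, hrfS, hSop, hA, hW⟩ := hp
          rw [Function.update_self] at hck
          set R : Instr := ⟨p, s.cnt p, IOp.reconcile⟩ with hR
          have hRP : R ∈ Prg N len prog := by
            rw [mem_Prg]; exact ⟨hiN.1, hiN.2, hk, hop.symm⟩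
          have hmoRL : mo R ⟨p, k, IOp.ld b⟩ :=
            H.instOrder R (Prg_sub_II N len prog m0 hRP) _
              (Prg_sub_II N len prog m0 (hsub _ hLD)) ⟨rfl, show s.cnt p < k by omega⟩ trivial
          have := hLF2 (Or.inr hop) _ hLD
          rw [hop] at this
          exact this hmoRL
        exact ⟨fun _ => 0, fun k S v' hp => absurd hp (hkill k S v'),
          fun k S v' k' S' v'' hp => absurd hp (hkill k S v')⟩
      · show ∃ f : ℕ → ℕ, (∀ k S v', PendC m0 mo rf D _ p b k S v' →
          (filtA ((Function.update s.ib i ([] : Buf)) p) b).get?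
            (f k) = some (b, v')) ∧ _
        rw [Function.update_of_ne hne]
        exact ib_carry (cnt_upd_le _ _) (fun _ => rfl) hib p b
  case nm =>
    refine ⟨_, PStep.nm s i hop, ?_⟩
    refine ⟨rfl, hsub, hclosed, cnt0_upd hcnt0 hiN, cntle_upd hcntle hk,
      lfD_upd hlfD (fun hlf => by rw [hop] at hlf; cases hlf), hmem, ?_,
      res_keep hres (fun a' h => by rw [hop] at h; cases h),
      ib_carry (cnt_upd_le _ _) (fun _ => rfl) hib⟩
    · intro p
      rcases eq_or_ne p i with rfl | hne
      · rw [sbSpec_succ_none (gD_none_of_not_st (by rw [hop]; rfl)), hsb]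
      · rw [sbSpec_update_ne hne, hsb]
  case ld =>
    have hLD : (⟨i, s.cnt i, IOp.ld a⟩ : Instr) ∈ D := by
      have := hLF1 (by rw [hop]; rfl); rwa [hop] at this
    have hLP := hsub _ hLD
    have hLI := Prg_sub_II N len prog m0 hLP
    obtain ⟨S, hrfS⟩ := H.rf_tot _ hLI a rfl
    obtain ⟨⟨v, hSop⟩, hrel, hmax⟩ := H.ldVal S _ a hrfS rfl
    by_cases hA : S ∈ D ∨ S = initInstr m0 a
    · have hnsb : ¬ hasAddr (s.sb i) a := by
        rw [hsb]
        exact no_sb_addr H hclosed hcntle hiN le_rfl hrfS hA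
      by_cases hO : ∃ W ∈ D, isStoreTo a W ∧ mo S W
      · -- (IB) read from the invalidation buffer
        obtain ⟨f, hf1, hf2⟩ := hib i a
        have hpend : PendC m0 mo rf D s.cnt i a (s.cnt i) S v :=
          ⟨le_rfl, hLD, hrfS, hSop, hA, hO⟩
        have hget := hf1 _ S v hpend
        obtain ⟨l1, l2, hsplit, htake⟩ := filtA_get?_split hget
        refine ⟨_, PStep.ldIb s i a v l1 l2 hop hnsb hsplit, ?_⟩
        refine ⟨rfl, hsub, hclosed, cnt0_upd hcnt0 hiN, cntle_upd hcntle hk,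
          lfD_upd hlfD (fun _ => hLF1 (by rw [hop]; rfl)), hmem, ?_,
          res_set H hres hop hrfS hSop, ?_⟩
        · intro p
          rcases eq_or_ne p i with rfl | hne
          · rw [sbSpec_succ_none (gD_none_of_not_st (by rw [hop]; rfl)), hsb]
          · rw [sbSpec_update_ne hne, hsb]
        · intro p b
          rcases eq_or_ne p i with rfl | hne
          · show ∃ f' : ℕ → ℕ, (∀ k0 S0 v0, PendC m0 mo rf D _ p b k0 S0 v0 →
              (filtA ((Function.update s.ib p (l1 ++ (a, v) :: remAddr l2 a)) p)
                b).get? (f' k0) = some (b, v0)) ∧ _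
            rw [Function.update_self]
            rcases eq_or_ne b a with rfl | hba
            · have hnew : filtA (l1 ++ (b, v) :: remAddr l2 b) b =
                  (filtA (s.ib p) b).take (f (s.cnt p) + 1) := by
                have hget' : (filtA (s.ib p) b)[f (s.cnt p)]? = some (b, v) := by
                  rw [← List.get?_eq_getElem?]; exact hget
                rw [filtA_append, filtA_cons_self, filtA_remAddr_self, htake,
                  List.take_succ, hget']
                rfl
              refine ⟨f, ?_, ?_⟩
              · intro k0 S0 v0 hp
                have hp' := PendC_cnt_mono (cnt_upd_le _ _) hp
                have hk0 : s.cnt p + 1 ≤ k0 := by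
                  have := hp.1
                  rwa [Function.update_self] at this
                have hle : f k0 ≤ f (s.cnt p) :=
                  hf2 _ _ _ _ _ _ hpend hp' (by omega)
                rw [hnew, get?_take' (by omega)]
                exact hf1 _ _ _ hp'
              · intro k0 S0 v0 k1 S1 v1 hp hp' hkk
                exact hf2 _ _ _ _ _ _ (PendC_cnt_mono (cnt_upd_le _ _) hp)
                  (PendC_cnt_mono (cnt_upd_le _ _) hp') hkk
            · obtain ⟨f', hg1, hg2⟩ := hib p b
              have hfilt : filtA (l1 ++ (a, v) :: remAddr l2 a) b =
                  filtA (s.ib p) b := by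
                rw [hsplit, filtA_append, filtA_append,
                  filtA_cons_ne (Ne.symm hba), filtA_cons_ne (Ne.symm hba),
                  filtA_remAddr_ne hba]
              refine ⟨f', ?_, ?_⟩
              · intro k0 S0 v0 hp
                rw [hfilt]
                exact hg1 _ _ _ (PendC_cnt_mono (cnt_upd_le _ _) hp)
              · intro k0 S0 v0 k1 S1 v1 hp hp' hkk
                exact hg2 _ _ _ _ _ _ (PendC_cnt_mono (cnt_upd_le _ _) hp)
                  (PendC_cnt_mono (cnt_upd_le _ _) hp') hkk
          · show ∃ f' : ℕ → ℕ, (∀ k0 S0 v0, PendC m0 mo rf D _ p b k0 S0 v0 →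
              (filtA ((Function.update s.ib i (l1 ++ (a, v) :: remAddr l2 a)) p)
                b).get? (f' k0) = some (b, v0)) ∧ _
            rw [Function.update_of_ne hne]
            exact ib_carry (cnt_upd_le _ _) (fun _ => rfl) hib p b
      · -- (MEM) read from the memory
        have hMax : MaxSt m0 mo D a S := by
          refine ⟨hA, ⟨v, hSop⟩, ?_⟩
          intro W hWD hWst
          by_cases hWS : W = S
          · exact Or.inl hWS
          rcases hWD with hWD | hWi
          · have hWI := Prg_sub_II N len prog m0 (hsub _ hWD)
            rcases H.total W hWI S (H.rf_mem _ _ hrfS).1 hWS with h1 | h1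
            · exact Or.inr h1
            · exact absurd ⟨W, hWD, hWst, h1⟩ hO
          · subst hWi
            rcases hA with hSD | hSi
            · exact Or.inr (H.hmin a S (H.rf_mem _ _ hrfS).1
                (Or.inl ⟨v, hSop⟩) (fun hc => hWS hc.symm))
            · exact absurd hSi.symm hWS
        obtain ⟨S1, v1, hM1, hS1op, hmemv⟩ := hmem a
        have hSS1 : S1 = S := MaxSt_unique H hM1 hMax
        have hmemv' : s.mem a = v := by
          rw [hSS1, hSop] at hS1op
          cases hS1op
          exact hmemv
        refine ⟨_, PStep.ldMem s i a hop hnsb, ?_⟩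
        refine ⟨rfl, hsub, hclosed, cnt0_upd hcnt0 hiN, cntle_upd hcntle hk,
          lfD_upd hlfD (fun _ => hLF1 (by rw [hop]; rfl)), hmem, ?_,
          res_set H hres hop hrfS (by rw [hmemv']; exact hSop), ?_⟩
        · intro p
          rcases eq_or_ne p i with rfl | hne
          · rw [sbSpec_succ_none (gD_none_of_not_st (by rw [hop]; rfl)), hsb]
          · rw [sbSpec_update_ne hne, hsb]
        · intro p b
          rcases eq_or_ne p i with rfl | hne
          · show ∃ f' : ℕ → ℕ, (∀ k0 S0 v0, PendC m0 mo rf D _ p b k0 S0 v0 →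
              (filtA ((Function.update s.ib p (remAddr (s.ib p) a)) p)
                b).get? (f' k0) = some (b, v0)) ∧ _
            rw [Function.update_self]
            rcases eq_or_ne b a with rfl | hba
            · have hkill : ∀ k0 S0 v0, ¬ PendC m0 mo rf D
                  (Function.update s.cnt p (s.cnt p + 1)) p b k0 S0 v0 := by
                intro k0 S0 v0 hp
                obtain ⟨hck, hL0D, hrf0, hS0op, hA0, hO0⟩ := hp
                rw [Function.update_self] at hck
                have hL0I := Prg_sub_II N len prog m0 (hsub _ hL0D)
                rcases rf_mono H (show s.cnt p < k0 by omega) hrfS hrf0 hLI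
                    hL0I with h1 | h1
                · subst h1
                  exact hO hO0
                · rcases hA0 with hS0D | hS0i
                  · exact hO ⟨S0, hS0D, ⟨v0, hS0op⟩, h1⟩
                  · rw [hS0i] at h1
                    rcases hA with hSD | hSi
                    · refine H.asym h1 ?_
                      refine H.hmin b S (H.rf_mem _ _ hrfS).1
                        (Or.inl ⟨v, hSop⟩) ?_
                      intro hc
                      rw [hc] at h1
                      exact H.irrefl _ h1
                    · rw [hSi] at h1
                      exact H.irrefl _ h1
              exact ⟨fun _ => 0, fun k0 S0 v0 hp => absurd hp (hkill k0 S0 v0),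
                fun k0 S0 v0 k1 S1' v1' hp => absurd hp (hkill k0 S0 v0)⟩
            · obtain ⟨f', hg1, hg2⟩ := hib p b
              refine ⟨f', ?_, ?_⟩
              · intro k0 S0 v0 hp
                rw [filtA_remAddr_ne hba]
                exact hg1 _ _ _ (PendC_cnt_mono (cnt_upd_le _ _) hp)
              · intro k0 S0 v0 k1 S1' v1' hp hp' hkk
                exact hg2 _ _ _ _ _ _ (PendC_cnt_mono (cnt_upd_le _ _) hp)
                  (PendC_cnt_mono (cnt_upd_le _ _) hp') hkk
          · show ∃ f' : ℕ → ℕ, (∀ k0 S0 v0, PendC m0 mo rf D _ p b k0 S0 v0 →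
              (filtA ((Function.update s.ib i (remAddr (s.ib i) a)) p)
                b).get? (f' k0) = some (b, v0)) ∧ _
            rw [Function.update_of_ne hne]
            exact ib_carry (cnt_upd_le _ _) (fun _ => rfl) hib p b
    · -- (SB) forward from the store buffer
      push_neg at hA
      obtain ⟨hSnD, hSni⟩ := hA
      have hSI := (H.rf_mem _ _ hrfS).1
      have hSP : S ∈ Prg N len prog := by
        rcases hSI with h | ⟨b, hb⟩
        · exact (mem_Prg N len prog).mpr h
        · exfalso
          have hop' : S.op = IOp.st b (m0 b) := by rw [hb]; rfl
          rw [hSop] at hop'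
          cases hop'
          exact hSni hb
      have hmoLS : mo (⟨i, s.cnt i, IOp.ld a⟩ : Instr) S :=
        hclosed _ hLD S hSP hSnD
      have hpoSL : po S ⟨i, s.cnt i, IOp.ld a⟩ := by
        rcases hrel with h1 | h1
        · exact absurd h1 (H.asym hmoLS)
        · exact h1
      obtain ⟨hSproc, hSidx⟩ := hpoSL
      have hSprog : prog i S.idx = IOp.st a v := by
        have h1 := ((mem_Prg N len prog).mp hSP).2.2.2
        rw [hSop, hSproc] at h1
        exact h1.symm
      have hSeq : S = ⟨i, S.idx, IOp.st a v⟩ := by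
        obtain ⟨sp, si, so⟩ := S
        simp only at hSproc hSop ⊢
        rw [hSproc, hSop]
      obtain ⟨r1, r2, hsp, hr1, hr2⟩ :=
        range_rev_split (show S.idx < s.cnt i from hSidx)
      have hsbeq : s.sb i =
          (r1.filterMap (gD prog D i)) ++ (a, v) :: (r2.filterMap (gD prog D i)) := by
        rw [hsb]
        unfold sbSpec
        rw [hsp, List.filterMap_append,
          List.filterMap_cons_some ((gD_eq_some (e := (a, v)) prog).mpr
            ⟨hSprog, fun hc => hSnD (by rw [hSeq]; exact hc)⟩)]
      have hy : ¬ hasAddr (r1.filterMap (gD prog D i)) a := by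
        rw [not_hasAddr_iff]
        intro e he hea
        obtain ⟨k', hk'r1, hgk'⟩ := List.mem_filterMap.mp he
        obtain ⟨hk'prog, hk'nD⟩ := (gD_eq_some prog).mp hgk'
        have hk'range : k' < s.cnt i := by
          have h2 : k' ∈ (List.range (s.cnt i)).reverse := by
            rw [hsp]
            exact List.mem_append.mpr (Or.inl hk'r1)
          rwa [List.mem_reverse, List.mem_range] at h2
        rw [hea] at hk'prog hk'nD
        have hWP : (⟨i, k', IOp.st a e.2⟩ : Instr) ∈ Prg N len prog := by
          rw [mem_Prg]
          exact ⟨hiN.1, hiN.2, lt_of_lt_of_le hk'range (hcntle i), hk'prog.symm⟩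
        have hWI := Prg_sub_II N len prog m0 hWP
        rcases hmax _ hWI ⟨e.2, rfl⟩ (Or.inr ⟨rfl, hk'range⟩) with h1 | h1
        · have hkS : S.idx = k' := by rw [← h1]
          have := hr1 k' hk'r1
          omega
        · have hpoSW : po S ⟨i, k', IOp.st a e.2⟩ := ⟨hSproc, hr1 k' hk'r1⟩
          have hmoSW : mo S ⟨i, k', IOp.st a e.2⟩ :=
            H.instOrder S hSI _ hWI hpoSW (by rw [hSop]; exact rfl)
          exact H.asym hmoSW h1
      refine ⟨_, PStep.ldSb s i a v _ _ hop hsbeq hy, ?_⟩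
      refine ⟨rfl, hsub, hclosed, cnt0_upd hcnt0 hiN, cntle_upd hcntle hk,
        lfD_upd hlfD (fun _ => hLF1 (by rw [hop]; rfl)), hmem, ?_,
        res_set H hres hop hrfS hSop,
        ib_carry (cnt_upd_le _ _) (fun _ => rfl) hib⟩
      · intro p
        rcases eq_or_ne p i with rfl | hne
        · rw [sbSpec_succ_none (gD_none_of_not_st (by rw [hop]; rfl)), hsb]
        · rw [sbSpec_update_ne hne, hsb]

end Main
end WmmAux
namespace WmmAux
section Main
variable {N : ℕ} {len : ℕ → ℕ} {prog : ℕ → ℕ → IOp} {m0 : ℕ → ℕ}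
variable {mo rf : Instr → Instr → Prop}

lemma Core.recnt {D : Finset Instr} {c c' : ℕ → ℕ} {s : PSt}
    (h : Core N len prog m0 mo rf D c s) (he : c = c') :
    Core N len prog m0 mo rf D c' s := he ▸ h

lemma advance (H : Hyp N len prog m0 mo rf) {D : Finset Instr}
    {i T : ℕ} (hiN : 1 ≤ i ∧ i ≤ N) (hT : T ≤ len i) :
    ∀ n (s : PSt), Core N len prog m0 mo rf D s.cnt s →
    (∀ k, s.cnt i ≤ k → k < T → lfB (prog i k) = true →
      (⟨i, k, prog i k⟩ : Instr) ∈ D ∧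
      ((prog i k = IOp.commit ∨ prog i k = IOp.reconcile) →
        ∀ W ∈ D, ¬ mo (⟨i, k, prog i k⟩ : Instr) W)) →
    (∀ k a v, s.cnt i ≤ k → k < T → prog i k = IOp.st a v →
      (⟨i, k, IOp.st a v⟩ : Instr) ∉ D) →
    T ≤ s.cnt i + n →
    ∃ s', Relation.ReflTransGen (PStep prog) s s' ∧
      Core N len prog m0 mo rf D s'.cnt s' ∧
      s'.cnt = Function.update s.cnt i (max (s.cnt i) T) := by
  intro n
  induction n with
  | zero =>
    intro s hC hLF hST hn
    refine ⟨s, Relation.ReflTransGen.refl, hC, ?_⟩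
    rw [Nat.max_eq_left (by omega), Function.update_eq_self]
  | succ n ih =>
    intro s hC hLF hST hn
    by_cases hTc : T ≤ s.cnt i
    · refine ⟨s, Relation.ReflTransGen.refl, hC, ?_⟩
      rw [Nat.max_eq_left hTc, Function.update_eq_self]
    · push_neg at hTc
      have hk : s.cnt i < len i := lt_of_lt_of_le hTc hT
      obtain ⟨s1, hstep, hC1⟩ := stepOne H hC hiN hk
        (fun hlf => (hLF _ le_rfl hTc hlf).1)
        (fun hco => by
          have hlf : lfB (prog i (s.cnt i)) = true := by
            rcases hco with h | h <;> rw [h] <;> rfl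
          exact (hLF _ le_rfl hTc hlf).2 hco)
        (fun a v hst => hST _ a v le_rfl hTc hst)
      have hc1 : s1.cnt = Function.update s.cnt i (s.cnt i + 1) := hC1.cnt_eq
      have hC1' : Core N len prog m0 mo rf D s1.cnt s1 := hC1.recnt hc1.symm
      have hcnti : s1.cnt i = s.cnt i + 1 := by
        rw [hc1, Function.update_self]
      obtain ⟨s', hsteps, hC', hcnt'⟩ := ih s1 hC1'
        (fun k h1 h2 hlf => hLF k (by omega) h2 hlf)
        (fun k a v h1 h2 hst => hST k a v (by omega) h2 hst)
        (by omega)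
      refine ⟨s', Relation.ReflTransGen.head hstep hsteps, hC', ?_⟩
      rw [hcnt', hc1]
      funext j
      rcases eq_or_ne j i with rfl | hne
      · simp only [Function.update_self]
        omega
      · simp only [Function.update_of_ne hne]

end Main
end WmmAux
namespace WmmAux
section Main
variable {N : ℕ} {len : ℕ → ℕ} {prog : ℕ → ℕ → IOp} {m0 : ℕ → ℕ}
variable {mo rf : Instr → Instr → Prop}

lemma ordTable_lf_sf {o o' : IOp} (h : lfB o = true) (h' : sfB o' = true) :
    ordTable o o' := by
  cases o <;> cases o' <;> simp [lfB, sfB] at h h' ⊢ <;> trivial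

lemma sbSpec_insert {D : Finset Instr} {Z : Instr} {cnt : ℕ → ℕ} {p : ℕ}
    (h : ∀ k' a v, (⟨p, k', IOp.st a v⟩ : Instr) ≠ Z) :
    sbSpec prog (insert Z D) cnt p = sbSpec prog D cnt p := by
  unfold sbSpec
  apply List.filterMap_congr
  intro k hk
  unfold gD
  rcases he : stOf (prog p k) with - | e
  · rfl
  · simp only [Option.bind, Finset.mem_insert, h k e.1 e.2, false_or]

lemma MaxSt_insert_nonstore {D : Finset Instr} {Z S : Instr} {b : ℕ}
    (hnst : ∀ a v, Z.op ≠ IOp.st a v) (h : MaxSt m0 mo D b S) :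
    MaxSt m0 mo (insert Z D) b S := by
  obtain ⟨h1, h2, h3⟩ := h
  refine ⟨?_, h2, ?_⟩
  · rcases h1 with h1 | h1
    · exact Or.inl (Finset.mem_insert_of_mem h1)
    · exact Or.inr h1
  · intro W hW hWst
    rcases hW with hW | hW
    · rcases Finset.mem_insert.mp hW with rfl | hW
      · obtain ⟨w, hw⟩ := hWst
        exact absurd hw (hnst b w)
      · exact h3 W (Or.inl hW) hWst
    · exact h3 W (Or.inr hW) hWst

/-- Adding a non-store instruction to the processed set preserves the
core invariant without any machine step. -/
lemma core_insert (H : Hyp N len prog m0 mo rf) {D : Finset Instr} {s : PSt}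
    {Z : Instr} (hC : Core N len prog m0 mo rf D s.cnt s)
    (hZP : Z ∈ Prg N len prog) (hZnD : Z ∉ D)
    (hmin : ∀ W ∈ Prg N len prog, W ∉ D → W ≠ Z → mo Z W)
    (hnst : ∀ a v, Z.op ≠ IOp.st a v) :
    Core N len prog m0 mo rf (insert Z D) s.cnt s := by
  obtain ⟨-, hsub, hclosed, hcnt0, hcntle, hlfD, hmem, hsb, hres, hib⟩ := hC
  have hZI := Prg_sub_II N len prog m0 hZP
  refine ⟨rfl, ?_, ?_, hcnt0, hcntle, ?_, ?_, ?_, hres, ?_⟩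
  · intro X hX
    rcases Finset.mem_insert.mp hX with rfl | hX
    · exact hZP
    · exact hsub X hX
  · intro X hX Y hYP hYnD
    have hYnD' : Y ∉ D := fun h => hYnD (Finset.mem_insert_of_mem h)
    have hYZ : Y ≠ Z := fun h => hYnD (h ▸ Finset.mem_insert_self Z D)
    rcases Finset.mem_insert.mp hX with rfl | hX
    · exact hmin Y hYP hYnD' hYZ
    · exact hclosed X hX Y hYP hYnD'
  · intro j k hjk hlf
    exact Finset.mem_insert_of_mem (hlfD j k hjk hlf)
  · intro b
    obtain ⟨S1, v1, hM1, hS1op, hmemv⟩ := hmem b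
    exact ⟨S1, v1, MaxSt_insert_nonstore hnst hM1, hS1op, hmemv⟩
  · intro p
    rw [hsb p]
    exact (sbSpec_insert (fun k' a v h =>
      hnst a v (by rw [← h]))).symm
  · intro p b
    obtain ⟨f, hf1, hf2⟩ := hib p b
    have hred : ∀ k0 S0 v0, PendC m0 mo rf (insert Z D) s.cnt p b k0 S0 v0 →
        PendC m0 mo rf D s.cnt p b k0 S0 v0 := by
      intro k0 S0 v0 hp
      obtain ⟨hck, hL0, hrf0, hS0op, hA0, W0, hW0, hW0st, hmoSW⟩ := hp
      have hW0D : W0 ∈ D := by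
        rcases Finset.mem_insert.mp hW0 with rfl | hW0
        · obtain ⟨w, hw⟩ := hW0st
          exact absurd hw (hnst b w)
        · exact hW0
      have hS0' : S0 ∈ D ∨ S0 = initInstr m0 b := by
        rcases hA0 with hA0 | hA0
        · rcases Finset.mem_insert.mp hA0 with rfl | hA0
          · exact absurd hS0op (hnst b v0)
          · exact Or.inl hA0
        · exact Or.inr hA0
      have hL0D : (⟨p, k0, IOp.ld b⟩ : Instr) ∈ D := by
        rcases Finset.mem_insert.mp hL0 with heq | hL0
        · -- the new instruction is this pending load: impossible
          exfalso
          have hmoWZ : mo W0 Z := hclosed W0 hW0D Z hZP hZnD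
          rw [← heq] at hmoWZ hZI
          obtain ⟨-, -, hmax0⟩ := H.ldVal S0 _ b hrf0 rfl
          rcases hmax0 W0 (Prg_sub_II N len prog m0 (hsub _ hW0D)) hW0st
              (Or.inl hmoWZ) with h1 | h1
          · exact H.irrefl _ (h1 ▸ hmoSW)
          · exact H.asym hmoSW h1
        · exact hL0
      exact ⟨hck, hL0D, hrf0, hS0op, hS0', W0, hW0D, hW0st, hmoSW⟩
    exact ⟨f, fun k0 S0 v0 hp => hf1 _ _ _ (hred _ _ _ hp),
      fun k0 S0 v0 k1 S1 v1 hp hp' hkk =>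
        hf2 _ _ _ _ _ _ (hred _ _ _ hp) (hred _ _ _ hp') hkk⟩

/-- Process a non-store instruction of the memory order. -/
lemma procNonStore (H : Hyp N len prog m0 mo rf) {D : Finset Instr} {s : PSt}
    {Z : Instr} (hC : Core N len prog m0 mo rf D s.cnt s)
    (hSF : SFex D s.cnt)
    (hZP : Z ∈ Prg N len prog) (hZnD : Z ∉ D)
    (hmin : ∀ W ∈ Prg N len prog, W ∉ D → W ≠ Z → mo Z W)
    (hnst : ∀ a v, Z.op ≠ IOp.st a v) :
    ∃ s', Relation.ReflTransGen (PStep prog) s s' ∧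
      Core N len prog m0 mo rf (insert Z D) s'.cnt s' ∧
      SFex (insert Z D) s'.cnt := by
  obtain ⟨h1N, h2N, hzlen, hzop⟩ := (mem_Prg N len prog).mp hZP
  have hC' : Core N len prog m0 mo rf (insert Z D) s.cnt s :=
    core_insert H hC hZP hZnD hmin hnst
  by_cases hsf : sfB Z.op = true
  · -- a fence: execute it now
    have hZeq : (⟨Z.proc, Z.idx, prog Z.proc Z.idx⟩ : Instr) = Z := by
      rw [← hzop]
    have hLF : ∀ k, s.cnt Z.proc ≤ k → k < Z.idx + 1 →
        lfB (prog Z.proc k) = true →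
        (⟨Z.proc, k, prog Z.proc k⟩ : Instr) ∈ insert Z D ∧
        ((prog Z.proc k = IOp.commit ∨ prog Z.proc k = IOp.reconcile) →
          ∀ W ∈ insert Z D, ¬ mo (⟨Z.proc, k, prog Z.proc k⟩ : Instr) W) := by
      intro k hk1 hk2 hlf
      rcases eq_or_ne k Z.idx with rfl | hkz
      · rw [hzop.symm, (rfl : (⟨Z.proc, Z.idx, Z.op⟩ : Instr) = Z)]
        refine ⟨Finset.mem_insert_self Z D, ?_⟩
        intro _ W hW
        rcases Finset.mem_insert.mp hW with rfl | hW
        · exact H.irrefl W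
        · exact H.asym (hC.closed W hW Z hZP hZnD)
      · have hkz' : k < Z.idx := by omega
        set Y : Instr := ⟨Z.proc, k, prog Z.proc k⟩ with hY
        have hYP : Y ∈ Prg N len prog :=
          mk_mem_Prg N len prog h1N h2N (by omega)
        have hYZ : Y ≠ Z := by
          intro h
          have : Y.idx = Z.idx := by rw [h]
          simp [hY] at this
          omega
        have hmoYZ : mo Y Z := by
          refine H.instOrder Y (Prg_sub_II N len prog m0 hYP) Z
            (Prg_sub_II N len prog m0 hZP) ⟨rfl, hkz'⟩ ?_
          exact ordTable_lf_sf hlf hsf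
        have hYD : Y ∈ D := by
          by_contra hYnD
          exact H.asym (hmin Y hYP hYnD hYZ) hmoYZ
        refine ⟨Finset.mem_insert_of_mem hYD, ?_⟩
        intro hfe
        exfalso
        have hsfY : sfB Y.op = true := by
          rcases hfe with h | h <;> simp [hY, h, sfB]
        have := hSF Y hYD hsfY
        simp [hY] at this
        omega
    have hST : ∀ k a v, s.cnt Z.proc ≤ k → k < Z.idx + 1 →
        prog Z.proc k = IOp.st a v →
        (⟨Z.proc, k, IOp.st a v⟩ : Instr) ∉ insert Z D := by
      intro k a v hk1 hk2 hst
      intro hmem'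
      have hne : (⟨Z.proc, k, IOp.st a v⟩ : Instr) ≠ Z := by
        intro h
        exact hnst a v (by rw [← h])
      rcases Finset.mem_insert.mp hmem' with h | h
      · exact hne h
      · have := hSF _ h rfl
        simp at this
        omega
    obtain ⟨s', hsteps, hC'', hcnt'⟩ := advance H (D := insert Z D)
      ⟨h1N, h2N⟩ hzlen (Z.idx + 1) s hC' hLF hST (by omega)
    refine ⟨s', hsteps, hC'', ?_⟩
    intro X hX hXsf
    rw [hcnt']
    rcases Finset.mem_insert.mp hX with rfl | hX
    · rw [Function.update_self]
      exact lt_of_lt_of_le (Nat.lt_succ_self _) (Nat.le_max_right _ _)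
    · have hx := hSF X hX hXsf
      rcases eq_or_ne X.proc Z.proc with he | hne
      · rw [he] at hx
        rw [he, Function.update_self]
        exact lt_of_lt_of_le hx (Nat.le_max_left _ _)
      · rwa [Function.update_of_ne hne]
  · -- a load or a non-memory instruction: no machine step needed
    refine ⟨s, Relation.ReflTransGen.refl, hC', ?_⟩
    intro X hX hXsf
    rcases Finset.mem_insert.mp hX with rfl | hX
    · exact absurd hXsf hsf
    · exact hSF X hX hXsf

end Main
end WmmAux
namespace WmmAux
section Main
variable {N : ℕ} {len : ℕ → ℕ} {prog : ℕ → ℕ → IOp} {m0 : ℕ → ℕ}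
variable {mo rf : Instr → Instr → Prop}

/-- Process a store instruction: execute the processor up to it and dequeue
it from the store buffer into the memory. -/
lemma procStore (H : Hyp N len prog m0 mo rf) {D : Finset Instr} {s : PSt}
    {Z : Instr} (hC : Core N len prog m0 mo rf D s.cnt s)
    (hSF : SFex D s.cnt)
    (hZP : Z ∈ Prg N len prog) (hZnD : Z ∉ D)
    (hmin : ∀ W ∈ Prg N len prog, W ∉ D → W ≠ Z → mo Z W)
    {a v : ℕ} (hzst : Z.op = IOp.st a v) :
    ∃ s', Relation.ReflTransGen (PStep prog) s s' ∧
      Core N len prog m0 mo rf (insert Z D) s'.cnt s' ∧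
      SFex (insert Z D) s'.cnt := by
  obtain ⟨h1N, h2N, hzlen, hzop⟩ := (mem_Prg N len prog).mp hZP
  have hZI := Prg_sub_II N len prog m0 hZP
  have hZeta : (⟨Z.proc, Z.idx, IOp.st a v⟩ : Instr) = Z := by rw [← hzst]
  have hprogz : prog Z.proc Z.idx = IOp.st a v := by rw [← hzop, hzst]
  have hZproc : 1 ≤ Z.proc := h1N
  have hZnInit : ∀ b, Z ≠ initInstr m0 b := by
    intro b h
    have : Z.proc = 0 := by rw [h]; rfl
    omega
  -- first execute the processor of `Z` up to (and including) `Z`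
  have hLF : ∀ k, s.cnt Z.proc ≤ k → k < Z.idx + 1 →
      lfB (prog Z.proc k) = true →
      (⟨Z.proc, k, prog Z.proc k⟩ : Instr) ∈ D ∧
      ((prog Z.proc k = IOp.commit ∨ prog Z.proc k = IOp.reconcile) →
        ∀ W ∈ D, ¬ mo (⟨Z.proc, k, prog Z.proc k⟩ : Instr) W) := by
    intro k hk1 hk2 hlf
    rcases eq_or_ne k Z.idx with rfl | hkz
    · rw [hprogz] at hlf
      cases hlf
    · have hkz' : k < Z.idx := by omega
      set Y : Instr := ⟨Z.proc, k, prog Z.proc k⟩ with hY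
      have hYP : Y ∈ Prg N len prog :=
        mk_mem_Prg N len prog h1N h2N (by omega)
      have hYZ : Y ≠ Z := by
        intro h
        have : Y.idx = Z.idx := by rw [h]
        simp [hY] at this
        omega
      have hmoYZ : mo Y Z := by
        refine H.instOrder Y (Prg_sub_II N len prog m0 hYP) Z hZI
          ⟨rfl, hkz'⟩ ?_
        rw [hzst]
        exact ordTable_lf_sf hlf rfl
      have hYD : Y ∈ D := by
        by_contra hYnD
        exact H.asym (hmin Y hYP hYnD hYZ) hmoYZ
      refine ⟨hYD, ?_⟩
      intro hfe
      exfalso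
      have hsfY : sfB Y.op = true := by
        rcases hfe with h | h <;> simp [hY, h, sfB]
      have := hSF Y hYD hsfY
      simp [hY] at this
      omega
  have hST : ∀ k a' v', s.cnt Z.proc ≤ k → k < Z.idx + 1 →
      prog Z.proc k = IOp.st a' v' →
      (⟨Z.proc, k, IOp.st a' v'⟩ : Instr) ∉ D := by
    intro k a' v' hk1 hk2 hst hmem'
    rcases eq_or_ne k Z.idx with rfl | hkz
    · rw [hprogz] at hst
      cases hst
      rw [hZeta] at hmem'
      exact hZnD hmem'
    · have := hSF _ hmem' rfl
      simp at this
      omega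
  obtain ⟨s1, hsteps1, hC1, hcnt1⟩ := advance H (D := D)
    ⟨h1N, h2N⟩ hzlen (Z.idx + 1) s hC hLF hST (by omega)
  have hzi : Z.idx < s1.cnt Z.proc := by
    rw [hcnt1, Function.update_self]
    have := Nat.le_max_right (s.cnt Z.proc) (Z.idx + 1)
    omega
  have hcntmono : ∀ j, s.cnt j ≤ s1.cnt j := by
    intro j
    rw [hcnt1]
    rcases eq_or_ne j Z.proc with rfl | hne
    · rw [Function.update_self]
      exact Nat.le_max_left _ _
    · rw [Function.update_of_ne hne]
  obtain ⟨-, hsub, hclosed, hcnt0, hcntle, hlfD, hmem, hsb, hres, hib⟩ := hC1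
  -- split the store buffer at `Z`
  obtain ⟨r1, r2, hsp, hr1, hr2⟩ := range_rev_split hzi
  set l1 : Buf := r1.filterMap (gD prog D Z.proc) with hl1
  set l2 : Buf := r2.filterMap (gD prog D Z.proc) with hl2
  have hsb1 : s1.sb Z.proc = l1 ++ (a, v) :: l2 := by
    rw [hsb]
    unfold sbSpec
    rw [hsp, List.filterMap_append,
      List.filterMap_cons_some ((gD_eq_some (e := (a, v)) prog).mpr
        ⟨hprogz, fun hc => hZnD (hZeta ▸ hc)⟩)]
  have hold : ¬ hasAddr l2 a := by
    rw [not_hasAddr_iff]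
    intro e he hea
    obtain ⟨k', hk'r2, hgk'⟩ := List.mem_filterMap.mp he
    obtain ⟨hk'prog, hk'nD⟩ := (gD_eq_some prog).mp hgk'
    rw [hea] at hk'prog hk'nD
    have hk'z : k' < Z.idx := hr2 k' hk'r2
    have hWP : (⟨Z.proc, k', IOp.st a e.2⟩ : Instr) ∈ Prg N len prog := by
      rw [mem_Prg]
      exact ⟨h1N, h2N, show k' < len Z.proc by omega, hk'prog.symm⟩
    have hmoWZ : mo (⟨Z.proc, k', IOp.st a e.2⟩ : Instr) Z := by
      refine H.instOrder _ (Prg_sub_II N len prog m0 hWP) Z hZI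
        ⟨rfl, hk'z⟩ ?_
      rw [hzst]
      exact rfl
    have hWZ : (⟨Z.proc, k', IOp.st a e.2⟩ : Instr) ≠ Z := by
      intro h
      have : (⟨Z.proc, k', IOp.st a e.2⟩ : Instr).idx = Z.idx := by rw [h]
      simp at this
      omega
    exact H.asym (hmin _ hWP hk'nD hWZ) hmoWZ
  refine ⟨_, Relation.ReflTransGen.trans hsteps1
    (Relation.ReflTransGen.single (PStep.deqSb s1 Z.proc a v l1 l2 hsb1 hold)),
    ?_, ?_⟩
  · -- the core invariant for the new state
    have hred : ∀ p b k0 S0 v0,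
        PendC m0 mo rf (insert Z D) s1.cnt p b k0 S0 v0 →
        ((⟨p, k0, IOp.ld b⟩ : Instr) ∈ D ∧ S0 ≠ Z ∧
          (S0 ∈ D ∨ S0 = initInstr m0 b)) ∧
        (PendC m0 mo rf D s1.cnt p b k0 S0 v0 ∨ (b = a ∧ mo S0 Z)) := by
      intro p b k0 S0 v0 hp
      obtain ⟨hck, hL0, hrf0, hS0op, hA0, W0, hW0, hW0st, hmoSW⟩ := hp
      have hL0D : (⟨p, k0, IOp.ld b⟩ : Instr) ∈ D := by
        rcases Finset.mem_insert.mp hL0 with heq | h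
        · exfalso
          have h2 : (⟨p, k0, IOp.ld b⟩ : Instr).op = Z.op := by rw [heq]
          rw [hzst] at h2
          cases h2
        · exact h
      have hS0Z : S0 ≠ Z := by
        rintro rfl
        rcases Finset.mem_insert.mp hW0 with rfl | hW0D
        · exact H.irrefl _ hmoSW
        · exact H.asym (hclosed W0 hW0D S0 hZP hZnD) hmoSW
      have hA0' : S0 ∈ D ∨ S0 = initInstr m0 b := by
        rcases hA0 with h | h
        · rcases Finset.mem_insert.mp h with rfl | h
          · exact absurd rfl hS0Z
          · exact Or.inl h
        · exact Or.inr h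
      refine ⟨⟨hL0D, hS0Z, hA0'⟩, ?_⟩
      rcases Finset.mem_insert.mp hW0 with rfl | hW0D
      · obtain ⟨w, hw⟩ := hW0st
        rw [hzst] at hw
        cases hw
        exact Or.inr ⟨rfl, hmoSW⟩
      · exact Or.inl ⟨hck, hL0D, hrf0, hS0op, hA0', W0, hW0D, hW0st, hmoSW⟩
    refine ⟨rfl, ?_, ?_, hcnt0, hcntle, ?_, ?_, ?_, hres, ?_⟩
    · intro X hX
      rcases Finset.mem_insert.mp hX with rfl | hX
      · exact hZP
      · exact hsub X hX
    · intro X hX Y hYP hYnD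
      have hYnD' : Y ∉ D := fun h => hYnD (Finset.mem_insert_of_mem h)
      have hYZ : Y ≠ Z := fun h => hYnD (h ▸ Finset.mem_insert_self Z D)
      rcases Finset.mem_insert.mp hX with rfl | hX
      · exact hmin Y hYP hYnD' hYZ
      · exact hclosed X hX Y hYP hYnD'
    · intro j k hjk hlf
      exact Finset.mem_insert_of_mem (hlfD j k hjk hlf)
    · -- memory
      intro b
      rcases eq_or_ne b a with rfl | hba
      · refine ⟨Z, v, ⟨Or.inl (Finset.mem_insert_self Z D), ⟨v, hzst⟩, ?_⟩,
          hzst, ?_⟩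
        · intro W hW hWst
          rcases hW with hW | hW
          · rcases Finset.mem_insert.mp hW with rfl | hWD
            · exact Or.inl rfl
            · exact Or.inr (hclosed W hWD Z hZP hZnD)
          · rw [hW]
            exact Or.inr (H.hmin b Z hZI (Or.inl ⟨v, hzst⟩) (hZnInit b))
        · show Function.update s1.mem b v b = v
          rw [Function.update_self]
      · obtain ⟨S1, v1, hM1, hS1op, hmemv⟩ := hmem b
        refine ⟨S1, v1, ?_, hS1op, ?_⟩
        · obtain ⟨hm1, hm2, hm3⟩ := hM1
          refine ⟨?_, hm2, ?_⟩
          · rcases hm1 with h | h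
            · exact Or.inl (Finset.mem_insert_of_mem h)
            · exact Or.inr h
          · intro W hW hWst
            rcases hW with hW | hW
            · rcases Finset.mem_insert.mp hW with rfl | hWD
              · exfalso
                obtain ⟨w, hw⟩ := hWst
                rw [hzst] at hw
                cases hw
                exact hba rfl
              · exact hm3 W (Or.inl hWD) hWst
            · exact hm3 W (Or.inr hW) hWst
        · show Function.update s1.mem a v b = v1
          rw [Function.update_of_ne hba]
          exact hmemv
    · -- store buffers
      have hgcong : ∀ k', k' ≠ Z.idx →
          gD prog (insert Z D) Z.proc k' = gD prog D Z.proc k' := by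
        intro k' hk'
        unfold gD
        rcases he : stOf (prog Z.proc k') with - | e
        · rfl
        · have hne : (⟨Z.proc, k', IOp.st e.1 e.2⟩ : Instr) ≠ Z := by
            intro h
            exact hk' (congrArg Instr.idx h)
          simp only [Option.bind, Finset.mem_insert, hne, false_or]
      intro p
      rcases eq_or_ne p Z.proc with rfl | hne
      · show Function.update s1.sb Z.proc (l1 ++ l2) Z.proc = _
        rw [Function.update_self]
        unfold sbSpec
        have hgz : gD prog (insert Z D) Z.proc Z.idx = none := by
          unfold gD
          rw [hprogz]
          show (if (⟨Z.proc, Z.idx, IOp.st a v⟩ : Instr) ∈ insert Z D then none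
            else some (a, v)) = none
          rw [if_pos (hZeta ▸ Finset.mem_insert_self Z D)]
        rw [hsp, List.filterMap_append, List.filterMap_cons_none hgz]
        congr 1
        · rw [hl1]
          exact List.filterMap_congr fun x hx =>
            (hgcong x (by have := hr1 x hx; omega)).symm
        · rw [hl2]
          exact List.filterMap_congr fun x hx =>
            (hgcong x (by have := hr2 x hx; omega)).symm
      · show Function.update s1.sb Z.proc (l1 ++ l2) p = _
        rw [Function.update_of_ne hne, hsb p]
        exact (sbSpec_insert (fun k' a' v' h =>
          hne (congrArg Instr.proc h))).symm
    · -- invalidation buffers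
      intro p b
      rcases eq_or_ne b a with rfl | hba
      · by_cases hif : p = Z.proc ∨ hasAddr (s1.sb p) b
        · -- buffer unchanged
          obtain ⟨f, hf1, hf2⟩ := hib p b
          have hmem2 : ∀ k0 S0 v0,
              PendC m0 mo rf (insert Z D) s1.cnt p b k0 S0 v0 →
              PendC m0 mo rf D s1.cnt p b k0 S0 v0 := by
            intro k0 S0 v0 hp
            obtain ⟨⟨hL0D, hS0Z, hA0'⟩, hdis⟩ := hred p b k0 S0 v0 hp
            rcases hdis with h | ⟨-, hmoSZ⟩
            · exact h
            · exfalso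
              obtain ⟨hck, hL0, hrf0, hS0op, -, -⟩ := hp
              rcases hif with rfl | hha
              · have hk0 : Z.idx < k0 := by omega
                obtain ⟨-, -, hmax0⟩ := H.ldVal S0 _ b hrf0 rfl
                rcases hmax0 Z hZI ⟨v, hzst⟩ (Or.inr ⟨rfl, hk0⟩)
                    with h1 | h1
                · exact hS0Z h1.symm
                · exact H.asym hmoSZ h1
              · have hbounds := opD hsub hL0D
                have hnsb := no_sb_addr H hclosed hcntle
                  ⟨hbounds.1, hbounds.2.1⟩ hck hrf0 hA0'
                rw [← hsb p] at hnsb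
                exact hnsb hha
          refine ⟨f, ?_, ?_⟩
          · intro k0 S0 v0 hp
            show (filtA (if p = Z.proc ∨ hasAddr (s1.sb p) b then s1.ib p
              else (b, s1.mem b) :: s1.ib p) b).get? (f k0) = some (b, v0)
            rw [if_pos hif]
            exact hf1 _ _ _ (hmem2 _ _ _ hp)
          · intro k0 S0 v0 k1 S1' v1' hp hp' hkk
            exact hf2 _ _ _ _ _ _ (hmem2 _ _ _ hp) (hmem2 _ _ _ hp') hkk
        · -- a new entry is prepended
          obtain ⟨f, hf1, hf2⟩ := hib p b
          obtain ⟨S1, v1, hM1, hS1op, hmemv⟩ := hmem b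
          have hnewmax : ∀ k0 S0 v0,
              PendC m0 mo rf (insert Z D) s1.cnt p b k0 S0 v0 →
              ¬ (∃ S' v', PendC m0 mo rf D s1.cnt p b k0 S' v') →
              S0 = S1 ∧ v0 = v1 := by
            intro k0 S0 v0 hp hnold
            obtain ⟨⟨hL0D, hS0Z, hA0'⟩, -⟩ := hred _ _ _ _ _ hp
            obtain ⟨hck, hL0, hrf0, hS0op, -, -⟩ := hp
            have hS0I : S0 ∈ II N len prog m0 := (H.rf_mem _ _ hrf0).1
            have hMax0 : MaxSt m0 mo D b S0 := by
              refine ⟨hA0', ⟨v0, hS0op⟩, ?_⟩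
              intro W hW hWst
              by_cases hWS : W = S0
              · exact Or.inl hWS
              rcases hW with hWD | hWi
              · rcases H.total W (Prg_sub_II N len prog m0 (hsub _ hWD))
                    S0 hS0I hWS with h1 | h1
                · exact Or.inr h1
                · exact absurd ⟨S0, v0, hck, hL0D, hrf0, hS0op, hA0',
                    W, hWD, hWst, h1⟩ hnold
              · subst hWi
                rcases hA0' with hSD | hSi
                · exact Or.inr (H.hmin b S0 hS0I (Or.inl ⟨v0, hS0op⟩)
                    (fun hc => hWS hc.symm))
                · exact absurd hSi.symm hWS
            have h01 : S0 = S1 := MaxSt_unique H hMax0 hM1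
            refine ⟨h01, ?_⟩
            rw [h01, hS1op] at hS0op
            cases hS0op
            rfl
          classical
          refine ⟨fun k0 => if ∃ S' v',
              PendC m0 mo rf D s1.cnt p b k0 S' v' then f k0 + 1 else 0,
            ?_, ?_⟩
          · intro k0 S0 v0 hp
            show (filtA (if p = Z.proc ∨ hasAddr (s1.sb p) b then s1.ib p
              else (b, s1.mem b) :: s1.ib p) b).get? _ = some (b, v0)
            rw [if_neg hif, filtA_cons_self]
            dsimp only
            by_cases hold2 : ∃ S' v', PendC m0 mo rf D s1.cnt p b k0 S' v'
            · rw [if_pos hold2]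
              obtain ⟨S', v', hp'⟩ := hold2
              have hrf0 : rf S0 ⟨p, k0, IOp.ld b⟩ := hp.2.2.1
              have hS0op : S0.op = IOp.st b v0 := hp.2.2.2.1
              have hSS : S' = S0 := rf_unique H hp'.2.2.1 hrf0 rfl
              subst hSS
              have hvv : v' = v0 := by
                have h1 := hp'.2.2.2.1
                rw [hS0op] at h1
                cases h1
                rfl
              subst hvv
              exact hf1 _ _ _ hp'
            · rw [if_neg hold2]
              obtain ⟨h01, hv01⟩ := hnewmax _ _ _ hp hold2
              show some (b, s1.mem b) = some (b, v0)
              rw [hmemv, hv01]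
          · intro k0 S0 v0 k1 S1' v1' hp hp' hkk
            dsimp only
            by_cases h1 : ∃ S' v', PendC m0 mo rf D s1.cnt p b k1 S' v'
            · rw [if_pos h1]
              by_cases h0 : ∃ S' v', PendC m0 mo rf D s1.cnt p b k0 S' v'
              · rw [if_pos h0]
                obtain ⟨Sa, va, hpa⟩ := h0
                obtain ⟨Sb, vb, hpb⟩ := h1
                exact Nat.succ_le_succ (hf2 _ _ _ _ _ _ hpa hpb hkk)
              · exfalso
                obtain ⟨⟨hL0D, hS0Z, hA0'⟩, -⟩ := hred _ _ _ _ _ hp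
                have hck : s1.cnt p ≤ k0 := hp.1
                have hrf0 : rf S0 ⟨p, k0, IOp.ld b⟩ := hp.2.2.1
                have hS0op : S0.op = IOp.st b v0 := hp.2.2.2.1
                obtain ⟨Sb, vb, hpb⟩ := h1
                obtain ⟨h01, hv01⟩ := hnewmax _ _ _ hp h0
                rcases eq_or_ne k0 k1 with rfl | hkne
                · exact h0 ⟨Sb, vb, hpb⟩
                · have hkl : k0 < k1 := by omega
                  have hL0I := Prg_sub_II N len prog m0 (hsub _ hL0D)
                  have hL1I := Prg_sub_II N len prog m0 (hsub _ hpb.2.1)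
                  obtain ⟨W, hWD, hWst, hmoW⟩ := hpb.2.2.2.2.2
                  rcases rf_mono H hkl hrf0 hpb.2.2.1 hL0I hL1I
                      with he | hmoS
                  · exact h0 ⟨S0, v0, hck, hL0D, hrf0, hS0op, hA0',
                      W, hWD, hWst, by rw [he]; exact hmoW⟩
                  · rcases hM1.2.2 W (Or.inl hWD) hWst with h2 | h2
                    · rw [h2, ← h01] at hmoW
                      exact H.asym hmoS hmoW
                    · rw [← h01] at h2
                      exact H.irrefl _
                        (H.tr _ _ _ (H.tr _ _ _ hmoS hmoW) h2)
            · rw [if_neg h1]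
              exact Nat.zero_le _
      · -- a different address: the buffer contents at `b` are unchanged
        obtain ⟨f, hf1, hf2⟩ := hib p b
        have hmem2 : ∀ k0 S0 v0,
            PendC m0 mo rf (insert Z D) s1.cnt p b k0 S0 v0 →
            PendC m0 mo rf D s1.cnt p b k0 S0 v0 := by
          intro k0 S0 v0 hp
          rcases (hred _ _ _ _ _ hp).2 with h | ⟨h, -⟩
          · exact h
          · exact absurd h hba
        have hfe : filtA (if p = Z.proc ∨ hasAddr (s1.sb p) a then s1.ib p
            else (a, s1.mem a) :: s1.ib p) b = filtA (s1.ib p) b := by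
          by_cases hif : p = Z.proc ∨ hasAddr (s1.sb p) a
          · rw [if_pos hif]
          · rw [if_neg hif, filtA_cons_ne (Ne.symm hba)]
        refine ⟨f, ?_, ?_⟩
        · intro k0 S0 v0 hp
          show (filtA (if p = Z.proc ∨ hasAddr (s1.sb p) a then s1.ib p
            else (a, s1.mem a) :: s1.ib p) b).get? (f k0) = some (b, v0)
          rw [hfe]
          exact hf1 _ _ _ (hmem2 _ _ _ hp)
        · intro k0 S0 v0 k1 S1' v1' hp hp' hkk
          exact hf2 _ _ _ _ _ _ (hmem2 _ _ _ hp) (hmem2 _ _ _ hp') hkk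
  · -- SFex
    intro X hX hXsf
    rcases Finset.mem_insert.mp hX with rfl | hX
    · exact hzi
    · have := hSF X hX hXsf
      exact lt_of_lt_of_le this (hcntmono X.proc)

end Main
end WmmAux
namespace WmmAux
section Main
variable {N : ℕ} {len : ℕ → ℕ} {prog : ℕ → ℕ → IOp} {m0 : ℕ → ℕ}
variable {mo rf : Instr → Instr → Prop}

/-- Process all program instructions in memory order. -/
lemma run (H : Hyp N len prog m0 mo rf) :
    ∀ n (D : Finset Instr) (s : PSt),
    (Prg N len prog \ D).card = n → D ⊆ Prg N len prog →
    Core N len prog m0 mo rf D s.cnt s → SFex D s.cnt →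
    ∃ s', Relation.ReflTransGen (PStep prog) s s' ∧
      Core N len prog m0 mo rf (Prg N len prog) s'.cnt s' ∧
      SFex (Prg N len prog) s'.cnt := by
  intro n
  induction n with
  | zero =>
    intro D s hcard hsubP hC hSF
    have hPD : Prg N len prog ⊆ D :=
      Finset.sdiff_eq_empty_iff_subset.mp (Finset.card_eq_zero.mp hcard)
    have hDP : D = Prg N len prog := Finset.Subset.antisymm hsubP hPD
    exact ⟨s, Relation.ReflTransGen.refl, hDP ▸ hC, hDP ▸ hSF⟩
  | succ n ih =>
    intro D s hcard hsubP hC hSF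
    have hne : (Prg N len prog \ D).Nonempty := by
      rw [← Finset.card_pos, hcard]
      omega
    obtain ⟨Z, hZR, hZmin⟩ := exists_min H _ hne
      (fun x hx => Prg_sub_II N len prog m0 (Finset.mem_sdiff.mp hx).1)
    have hZP := (Finset.mem_sdiff.mp hZR).1
    have hZnD := (Finset.mem_sdiff.mp hZR).2
    have hmin' : ∀ W ∈ Prg N len prog, W ∉ D → W ≠ Z → mo Z W :=
      fun W h1 h2 h3 => hZmin W (Finset.mem_sdiff.mpr ⟨h1, h2⟩) h3
    have hproc : ∃ s1, Relation.ReflTransGen (PStep prog) s s1 ∧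
        Core N len prog m0 mo rf (insert Z D) s1.cnt s1 ∧
        SFex (insert Z D) s1.cnt := by
      rcases hzo : Z.op with b | ⟨a, v⟩ | _ | _ | _
      · exact procNonStore H hC hSF hZP hZnD hmin'
          (fun a v h => by rw [hzo] at h; cases h)
      · exact procStore H hC hSF hZP hZnD hmin' hzo
      · exact procNonStore H hC hSF hZP hZnD hmin'
          (fun a v h => by rw [hzo] at h; cases h)
      · exact procNonStore H hC hSF hZP hZnD hmin'
          (fun a v h => by rw [hzo] at h; cases h)
      · exact procNonStore H hC hSF hZP hZnD hmin'
          (fun a v h => by rw [hzo] at h; cases h)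
    obtain ⟨s1, hsteps1, hC1, hSF1⟩ := hproc
    have hcard' : (Prg N len prog \ insert Z D).card = n := by
      rw [Finset.sdiff_insert, Finset.card_erase_of_mem hZR, hcard]
      omega
    have hsubP' : insert Z D ⊆ Prg N len prog :=
      Finset.insert_subset hZP hsubP
    obtain ⟨s', hsteps', hC', hSF'⟩ := ih (insert Z D) s1 hcard' hsubP' hC1 hSF1
    exact ⟨s', Relation.ReflTransGen.trans hsteps1 hsteps', hC', hSF'⟩

/-- Execute all remaining (load and non-memory) instructions at the end. -/
lemma finish (H : Hyp N len prog m0 mo rf) :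
    ∀ n (s : PSt), n ≤ N →
    Core N len prog m0 mo rf (Prg N len prog) s.cnt s →
    SFex (Prg N len prog) s.cnt →
    ∃ s', Relation.ReflTransGen (PStep prog) s s' ∧
      Core N len prog m0 mo rf (Prg N len prog) s'.cnt s' ∧
      SFex (Prg N len prog) s'.cnt ∧
      (∀ i, 1 ≤ i → i ≤ n → s'.cnt i = len i) := by
  intro n
  induction n with
  | zero =>
    intro s _ hC hSF
    exact ⟨s, Relation.ReflTransGen.refl, hC, hSF, fun i h1 h2 => by omega⟩
  | succ n ih =>
    intro s hn hC hSF
    obtain ⟨s1, hsteps1, hC1, hSF1, hcnt1⟩ := ih s (by omega) hC hSF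
    have hiN : 1 ≤ n + 1 ∧ n + 1 ≤ N := ⟨by omega, hn⟩
    have hLF : ∀ k, s1.cnt (n+1) ≤ k → k < len (n+1) →
        lfB (prog (n+1) k) = true →
        (⟨n+1, k, prog (n+1) k⟩ : Instr) ∈ Prg N len prog ∧
        ((prog (n+1) k = IOp.commit ∨ prog (n+1) k = IOp.reconcile) →
          ∀ W ∈ Prg N len prog, ¬ mo (⟨n+1, k, prog (n+1) k⟩ : Instr) W) := by
      intro k hk1 hk2 hlf
      have hP : (⟨n+1, k, prog (n+1) k⟩ : Instr) ∈ Prg N len prog :=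
        mk_mem_Prg N len prog hiN.1 hiN.2 hk2
      refine ⟨hP, ?_⟩
      intro hfe
      exfalso
      have hsfY : sfB (prog (n+1) k) = true := by
        rcases hfe with h | h <;> rw [h] <;> rfl
      have := hSF1 _ hP hsfY
      simp at this
      omega
    have hST : ∀ k a v, s1.cnt (n+1) ≤ k → k < len (n+1) →
        prog (n+1) k = IOp.st a v →
        (⟨n+1, k, IOp.st a v⟩ : Instr) ∉ Prg N len prog := by
      intro k a v hk1 hk2 hst hP
      have := hSF1 _ hP rfl
      simp at this
      omega
    obtain ⟨s', hsteps', hC', hcnt'⟩ := advance H (D := Prg N len prog)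
      hiN le_rfl (len (n+1)) s1 hC1 hLF hST (by omega)
    have hmono : ∀ j, s1.cnt j ≤ s'.cnt j := by
      intro j
      rw [hcnt']
      rcases eq_or_ne j (n+1) with rfl | hne
      · rw [Function.update_self]
        exact Nat.le_max_left _ _
      · rw [Function.update_of_ne hne]
    refine ⟨s', Relation.ReflTransGen.trans hsteps1 hsteps', hC', ?_, ?_⟩
    · intro X hX hXsf
      exact lt_of_lt_of_le (hSF1 X hX hXsf) (hmono X.proc)
    intro i h1 h2
    rw [hcnt']
    rcases eq_or_ne i (n+1) with rfl | hne
    · rw [Function.update_self]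
      have := hC1.cntle (n+1)
      omega
    · rw [Function.update_of_ne hne]
      exact hcnt1 i h1 (by omega)

end Main
end WmmAux
/-- Completeness of WMM I²E w.r.t. the WMM axiomatic model:
given any `mo`, `rf` over a finite program's instructions (processors 1..N,
processor `i` having `len i` instructions, plus `mo`-minimal initialization
stores) satisfying the Inst-Order and Ld-Val axioms of WMM, there is an
execution of the WMM I²E machine of the same program in which every load
returns the value of the store assigned to it by `rf`. -/
theorem wmm_i2e_complete (N : ℕ) (len : ℕ → ℕ) (prog : ℕ → ℕ → IOp)
    (m0 : ℕ → ℕ)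
    (I : Set Instr)
    (hI : I = { x : Instr | (1 ≤ x.proc ∧ x.proc ≤ N ∧ x.idx < len x.proc ∧
                              x.op = prog x.proc x.idx) ∨
                            (∃ a, x = initInstr m0 a) })
    (mo rf : Instr → Instr → Prop)
    (hmo_irrefl : ∀ x, ¬ mo x x)
    (hmo_trans : ∀ x y z, mo x y → mo y z → mo x z)
    (hmo_total : ∀ x ∈ I, ∀ y ∈ I, x ≠ y → mo x y ∨ mo y x)
    -- initialization stores are `mo`-minimal among same-address accesses:
    (hmin : ∀ a, ∀ x ∈ I, (isStoreTo a x ∨ isLoadOf a x) →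
      x ≠ initInstr m0 a → mo (initInstr m0 a) x)
    -- Axiom Inst-Order:
    (hinstOrder : ∀ x ∈ I, ∀ y ∈ I, po x y → ordTable x.op y.op → mo x y)
    (hrf_mem : ∀ S L, rf S L → S ∈ I ∧ L ∈ I)
    -- every load reads from exactly one store:
    (hrf_tot : ∀ L ∈ I, ∀ a, L.op = IOp.ld a → ∃ S, rf S L)
    -- Axiom Ld-Val:
    (hldVal : ∀ S L a, rf S L → L.op = IOp.ld a →
      isStoreTo a S ∧ (mo S L ∨ po S L) ∧
      ∀ S' ∈ I, isStoreTo a S' → (mo S' L ∨ po S' L) → S' = S ∨ mo S' S) :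
    ∃ s : PSt, Relation.ReflTransGen (PStep prog) (PInit m0) s ∧
      (∀ i, s.cnt i = if 1 ≤ i ∧ i ≤ N then len i else 0) ∧
      (∀ i k a S v, 1 ≤ i → i ≤ N → k < len i → prog i k = IOp.ld a →
        rf S ⟨i, k, IOp.ld a⟩ → S.op = IOp.st a v → s.res i k = v) := by
  subst hI
  have H : WmmAux.Hyp N len prog m0 mo rf :=
    ⟨hmo_irrefl, hmo_trans, hmo_total, hmin, hinstOrder, hrf_mem, hrf_tot,
      hldVal⟩
  have hC0 : WmmAux.Core N len prog m0 mo rf ∅ (PInit m0).cnt (PInit m0) := by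
    refine ⟨rfl, ?_, ?_, ?_, ?_, ?_, ?_, ?_, ?_, ?_⟩
    · intro X hX
      exact absurd hX (Finset.notMem_empty X)
    · intro X hX
      exact absurd hX (Finset.notMem_empty X)
    · intro i _
      rfl
    · intro i
      exact Nat.zero_le _
    · intro i k hk
      exact absurd hk (Nat.not_lt_zero k)
    · intro a
      refine ⟨initInstr m0 a, m0 a, ⟨Or.inr rfl, ⟨m0 a, rfl⟩, ?_⟩, rfl, rfl⟩
      intro W hW hWst
      rcases hW with hW | hW
      · exact absurd hW (Finset.notMem_empty W)
      · exact Or.inl hW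
    · intro i
      rfl
    · intro i k a S v hk
      exact absurd hk (Nat.not_lt_zero k)
    · intro p b
      refine ⟨fun _ => 0, ?_, ?_⟩
      · intro k S v hp
        exact absurd hp.2.1 (Finset.notMem_empty _)
      · intro k S v k' S' v' hp _ _
        exact absurd hp.2.1 (Finset.notMem_empty _)
  have hSF0 : WmmAux.SFex ∅ (PInit m0).cnt :=
    fun X hX _ => absurd hX (Finset.notMem_empty X)
  obtain ⟨s1, hsteps1, hC1, hSF1⟩ := WmmAux.run H _ ∅ (PInit m0) rfl
    (Finset.empty_subset _) hC0 hSF0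
  obtain ⟨s2, hsteps2, hC2, hSF2, hcnt2⟩ := WmmAux.finish H N s1 le_rfl hC1 hSF1
  refine ⟨s2, Relation.ReflTransGen.trans hsteps1 hsteps2, ?_, ?_⟩
  · intro i
    by_cases hi : 1 ≤ i ∧ i ≤ N
    · rw [if_pos hi]
      exact hcnt2 i hi.1 hi.2
    · rw [if_neg hi]
      exact hC2.cnt0 i hi
  · intro i k a S v h1 h2 h3 h4 h5 h6
    have hki : k < s2.cnt i := by
      rw [hcnt2 i h1 h2]
      exact h3
    exact hC2.res i k a S v hki h4 h5 h6
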